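/- arXiv:0809.2594 — 10 statements merged into one kernel-verified Lean document; each statement's English description precedes it below -/
import Mathlib

section
/- Let Ω ⊆ ℝⁿ be an open convex set, T ⊆ ℝ a compact set, and h : ℝⁿ × T → ℝ continuous on Ω × T such that p ↦ h(p, τ) is convex on Ω for every τ ∈ T. Define f(p) = max_{τ ∈ T} h(p, τ). Then f is convex on Ω, and for every p ∈ Ω and v ∈ ℝⁿ the one-sided directional derivative f′(p; v) := lim_{t→0⁺} (f(p + t·v) − f(p))/t exists and satisfies f′(p; v) = max_{τ ∈ T(p)} h′(p, τ; v), where T(p) = {τ ∈ T : h(p, τ) = f(p)} and h′(p, τ; v) := lim_{t→0⁺} (h(p + t·v, τ) − h(p, τ))/t. -/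
open Filter Topology Set

lemma oneD {ε : ℝ} (hε : 0 < ε) {φ : ℝ → ℝ} (hφ : ConvexOn ℝ (Set.Ioo (-ε) ε) φ) :
    ∃ D : ℝ, Tendsto (fun t => (φ t - φ 0) / t) (𝓝[>] 0) (𝓝 D) ∧
      ∀ t ∈ Set.Ioo (0:ℝ) ε, D ≤ (φ t - φ 0) / t := by
  set q : ℝ → ℝ := fun t => (φ t - φ 0) / t with hqdef
  have h0 : (0:ℝ) ∈ Ioo (-ε) ε := ⟨neg_lt_zero.2 hε, hε⟩
  have hsub : ∀ t ∈ Ioo (0:ℝ) ε, t ∈ Ioo (-ε) ε := fun t ht =>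
    ⟨lt_trans (neg_lt_zero.2 hε) ht.1, ht.2⟩
  have hmono : MonotoneOn q (Ioo 0 ε) := by
    intro x hx y hy hxy
    have := hφ.secant_mono h0 (hsub x hx) (hsub y hy) hx.1.ne' hy.1.ne' hxy
    simpa [q, sub_zero] using this
  have hm2 : -(ε/2) ∈ Ioo (-ε) ε := by constructor <;> nlinarith
  have hbdd : BddBelow (q '' Ioo 0 ε) := by
    refine ⟨q (-(ε/2)), ?_⟩
    rintro _ ⟨t, ht, rfl⟩
    have := hφ.secant_mono h0 hm2 (hsub t ht) (by nlinarith) ht.1.ne'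
      (by nlinarith [ht.1])
    simpa [q, sub_zero] using this
  have hne : (Ioo (0:ℝ) ε).Nonempty := ⟨ε/2, half_pos hε, half_lt_self hε⟩
  exact ⟨sInf (q '' Ioo 0 ε), hmono.tendsto_nhdsWithin_Ioo_right hne hbdd,
    fun t ht => csInf_le hbdd ⟨t, ht, rfl⟩⟩

/-- Euclidean instance of the first part of Proposition 4.3: directional derivative of
a max-function over a compact parameter set. -/
theorem stmt_1 {n : ℕ} (Ω : Set (EuclideanSpace ℝ (Fin n))) (hΩo : IsOpen Ω)
    (hΩc : Convex ℝ Ω) (T : Set ℝ) (hT : IsCompact T) (hTne : T.Nonempty)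
    (h : EuclideanSpace ℝ (Fin n) → ℝ → ℝ)
    (hcont : ContinuousOn (fun q : EuclideanSpace ℝ (Fin n) × ℝ => h q.1 q.2) (Ω ×ˢ T))
    (hconv : ∀ τ ∈ T, ConvexOn ℝ Ω fun p => h p τ)
    (f : EuclideanSpace ℝ (Fin n) → ℝ)
    (hf : ∀ p, f p = sSup ((fun τ => h p τ) '' T)) :
    ConvexOn ℝ Ω f ∧
    ∀ p ∈ Ω, ∀ v : EuclideanSpace ℝ (Fin n),
      ∃ D : ℝ,
        Tendsto (fun t : ℝ => (f (p + t • v) - f p) / t) (𝓝[>] 0) (𝓝 D) ∧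
        (∀ τ ∈ T, h p τ = f p →
          ∃ Dτ : ℝ,
            Tendsto (fun t : ℝ => (h (p + t • v) τ - h p τ) / t) (𝓝[>] 0) (𝓝 Dτ) ∧
            Dτ ≤ D) ∧
        (∃ τ ∈ T, h p τ = f p ∧
          Tendsto (fun t : ℝ => (h (p + t • v) τ - h p τ) / t) (𝓝[>] 0) (𝓝 D)) := by
  classical
  have hcp : ∀ p ∈ Ω, ContinuousOn (fun τ => h p τ) T := by
    intro p hp
    have hpm : ContinuousOn (fun τ : ℝ => ((p, τ) : EuclideanSpace ℝ (Fin n) × ℝ)) T :=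
      (Continuous.prodMk_right p).continuousOn
    exact hcont.comp hpm (fun τ hτ => ⟨hp, hτ⟩)
  have attain : ∀ p ∈ Ω, ∃ τ ∈ T,
      (∀ σ ∈ T, h p σ ≤ h p τ) ∧ h p τ = f p := by
    intro p hp
    obtain ⟨τ, hτT, hmax⟩ := hT.exists_isMaxOn hTne (hcp p hp)
    refine ⟨τ, hτT, fun σ hσ => hmax hσ, ?_⟩
    rw [hf p]
    have hgr : IsGreatest ((fun τ => h p τ) '' T) (h p τ) :=
      ⟨⟨τ, hτT, rfl⟩, by rintro _ ⟨σ, hσ, rfl⟩; exact hmax hσ⟩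
    exact hgr.csSup_eq.symm
  have bound : ∀ p ∈ Ω, ∀ σ ∈ T, h p σ ≤ f p := by
    intro p hp σ hσ
    obtain ⟨τ, hτT, hmax, hval⟩ := attain p hp
    exact hval ▸ hmax σ hσ
  have hfconv : ConvexOn ℝ Ω f := by
    refine ⟨hΩc, fun x hx y hy a b ha hb hab => ?_⟩
    have hz : a • x + b • y ∈ Ω := hΩc hx hy ha hb hab
    obtain ⟨τ, hτT, hmax, hval⟩ := attain _ hz
    rw [← hval]
    calc h (a • x + b • y) τ ≤ a • h x τ + b • h y τ := (hconv τ hτT).2 hx hy ha hb hab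
    _ ≤ a • f x + b • f y :=
        add_le_add (smul_le_smul_of_nonneg_left (bound x hx τ hτT) ha)
          (smul_le_smul_of_nonneg_left (bound y hy τ hτT) hb)
  refine ⟨hfconv, ?_⟩
  intro p hp v
  -- choose ε so that the whole segment stays in Ω
  obtain ⟨ε, hε, hmem⟩ : ∃ ε > 0, ∀ t : ℝ, t ∈ Ioo (-ε) ε → p + t • v ∈ Ω := by
    have hc : Continuous (fun t : ℝ => p + t • v) :=
      continuous_const.add (continuous_id.smul continuous_const)
    obtain ⟨ε, hε, hball⟩ := Metric.isOpen_iff.1 (hΩo.preimage hc) 0 (by simpa using hp)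
    refine ⟨ε, hε, fun t ht => ?_⟩
    apply hball
    rw [Metric.mem_ball, Real.dist_eq, sub_zero]
    exact abs_lt.2 ⟨ht.1, ht.2⟩
  have hsub : ∀ t ∈ Ioo (0:ℝ) ε, t ∈ Ioo (-ε) ε := fun t ht =>
    ⟨lt_trans (neg_lt_zero.2 hε) ht.1, ht.2⟩
  have h0mem : (0:ℝ) ∈ Ioo (-ε) ε := ⟨neg_lt_zero.2 hε, hε⟩
  -- convexity along the line
  have haff : ∀ g : EuclideanSpace ℝ (Fin n) → ℝ, ConvexOn ℝ Ω g →
      ConvexOn ℝ (Ioo (-ε) ε) (fun t => g (p + t • v)) := by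
    intro g hg
    refine ⟨convex_Ioo _ _, fun s hs t ht a b ha hb hab => ?_⟩
    have hpt : p + (a • s + b • t) • v = a • (p + s • v) + b • (p + t • v) := by
      simp only [smul_eq_mul]
      rw [show p + (a * s + b * t) • v = (a + b) • p + (a * s + b * t) • v by
        rw [hab, one_smul]]
      module
    show g (p + (a • s + b • t) • v) ≤ _
    rw [hpt]
    exact hg.2 (hmem s hs) (hmem t ht) ha hb hab
  obtain ⟨D, hDlim, hDlb⟩ := oneD hε (haff f hfconv)
  simp only [zero_smul, add_zero] at hDlim hDlb
  refine ⟨D, hDlim, ?_, ?_⟩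
  · -- every active τ has a directional derivative ≤ D
    intro τ hτT hact
    obtain ⟨Dτ, hDτlim, _⟩ := oneD hε (haff _ (hconv τ hτT))
    simp only [zero_smul, add_zero] at hDτlim
    refine ⟨Dτ, hDτlim, ?_⟩
    refine le_of_tendsto_of_tendsto hDτlim hDlim ?_
    filter_upwards [Ioo_mem_nhdsGT hε] with t ht
    have h1 : h (p + t • v) τ ≤ f (p + t • v) := bound _ (hmem t (hsub t ht)) τ hτT
    rw [hact]
    gcongr
    exact ht.1.le
  -- the hard part : some active τ attains D
  · set tseq : ℕ → ℝ := fun k => ε / 2 * (1 / ((k : ℝ) + 1)) with htseqdef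
    have htpos : ∀ k, 0 < tseq k := fun k => by positivity
    have htlt : ∀ k, tseq k < ε := by
      intro k
      have h1 : (1:ℝ) / ((k:ℝ) + 1) ≤ 1 := by
        rw [div_le_one (by positivity)]
        linarith [Nat.cast_nonneg (α := ℝ) k]
      have : tseq k ≤ ε / 2 * 1 := by
        apply mul_le_mul_of_nonneg_left h1 (by positivity)
      nlinarith
    have htmem : ∀ k, tseq k ∈ Ioo (0:ℝ) ε := fun k => ⟨htpos k, htlt k⟩
    have htlim : Tendsto tseq atTop (𝓝 0) := by
      have h2 := tendsto_one_div_add_atTop_nhds_zero_nat.const_mul (ε / 2)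
      rw [mul_zero] at h2
      exact h2
    have hchoice : ∀ k, ∃ τ ∈ T,
        (∀ σ ∈ T, h (p + tseq k • v) σ ≤ h (p + tseq k • v) τ) ∧
          h (p + tseq k • v) τ = f (p + tseq k • v) :=
      fun k => attain _ (hmem _ (hsub _ (htmem k)))
    choose τk hτkT hτkmax hτkval using hchoice
    obtain ⟨τs, hτsT, ψ, hψmono, hψlim⟩ := hT.tendsto_subseq hτkT
    set u : ℕ → ℝ := fun j => tseq (ψ j) with hudef
    have hulim : Tendsto u atTop (𝓝 0) := htlim.comp hψmono.tendsto_atTop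
    have hplim : Tendsto (fun j => p + u j • v) atTop (𝓝 p) := by
      have := (hulim.smul_const v).const_add p
      simpa using this
    have key_cont : ∀ (a : ℕ → EuclideanSpace ℝ (Fin n)) (b : ℕ → ℝ)
        (x : EuclideanSpace ℝ (Fin n)) (σ : ℝ), x ∈ Ω → σ ∈ T →
        (∀ k, a k ∈ Ω) → (∀ k, b k ∈ T) →
        Tendsto a atTop (𝓝 x) → Tendsto b atTop (𝓝 σ) →
        Tendsto (fun k => h (a k) (b k)) atTop (𝓝 (h x σ)) := by
      intro a b x σ hx hσ haΩ hbT hal hbl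
      have hcw := hcont (x, σ) ⟨hx, hσ⟩
      have hseq : Tendsto (fun k => (a k, b k)) atTop (𝓝[Ω ×ˢ T] (x, σ)) :=
        tendsto_nhdsWithin_iff.2 ⟨hal.prodMk_nhds hbl,
          Eventually.of_forall fun k => ⟨haΩ k, hbT k⟩⟩
      exact hcw.tendsto.comp hseq
    have hfc : Tendsto (fun j => f (p + u j • v)) atTop (𝓝 (f p)) := by
      have hco : ContinuousOn (fun t => f (p + t • v)) (Ioo (-ε) ε) :=
        (haff f hfconv).continuousOn isOpen_Ioo
      have hca : ContinuousAt (fun t : ℝ => f (p + t • v)) (0:ℝ) :=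
        hco.continuousAt (isOpen_Ioo.mem_nhds h0mem)
      have := hca.tendsto.comp hulim
      simpa [Function.comp_def] using this
    have hτs_act : h p τs = f p := by
      have h1 : Tendsto (fun j => h (p + u j • v) (τk (ψ j))) atTop (𝓝 (h p τs)) :=
        key_cont _ _ p τs hp hτsT (fun j => hmem _ (hsub _ (htmem (ψ j))))
          (fun j => hτkT (ψ j)) hplim hψlim
      have h2 : Tendsto (fun j => h (p + u j • v) (τk (ψ j))) atTop (𝓝 (f p)) := by
        have heq : (fun j => h (p + u j • v) (τk (ψ j))) = fun j => f (p + u j • v) :=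
          funext fun j => hτkval (ψ j)
        rw [heq]; exact hfc
      exact tendsto_nhds_unique h1 h2
    have hkey2 : ∀ s ∈ Ioo (0:ℝ) ε, D ≤ (h (p + s • v) τs - h p τs) / s := by
      intro s hs
      have hRlim : Tendsto (fun j => (h (p + s • v) (τk (ψ j)) - h p (τk (ψ j))) / s)
          atTop (𝓝 ((h (p + s • v) τs - h p τs) / s)) := by
        have hA : Tendsto (fun j => h (p + s • v) (τk (ψ j))) atTop (𝓝 (h (p + s • v) τs)) :=
          key_cont (fun _ => p + s • v) _ (p + s • v) τs (hmem s (hsub s hs)) hτsT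
            (fun _ => hmem s (hsub s hs)) (fun j => hτkT (ψ j)) tendsto_const_nhds hψlim
        have hB : Tendsto (fun j => h p (τk (ψ j))) atTop (𝓝 (h p τs)) :=
          key_cont (fun _ => p) _ p τs hp hτsT (fun _ => hp) (fun j => hτkT (ψ j))
            tendsto_const_nhds hψlim
        exact (hA.sub hB).div_const s
      refine ge_of_tendsto hRlim ?_
      have hev : ∀ᶠ j in atTop, u j < s := hulim.eventually (gt_mem_nhds hs.1)
      filter_upwards [hev] with j hj
      have hq1 : D ≤ (f (p + u j • v) - f p) / u j := hDlb _ (htmem (ψ j))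
      have hq2 : (f (p + u j • v) - f p) / u j
          ≤ (h (p + u j • v) (τk (ψ j)) - h p (τk (ψ j))) / u j := by
        have hb : h p (τk (ψ j)) ≤ f p := bound p hp _ (hτkT _)
        rw [← hτkval (ψ j)]
        gcongr
      have hq3 : (h (p + u j • v) (τk (ψ j)) - h p (τk (ψ j))) / u j
          ≤ (h (p + s • v) (τk (ψ j)) - h p (τk (ψ j))) / s := by
        have := (haff _ (hconv _ (hτkT (ψ j)))).secant_mono h0mem
          (hsub _ (htmem (ψ j))) (hsub s hs) (htpos (ψ j)).ne' hs.1.ne' hj.le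
        simpa [zero_smul, add_zero, sub_zero] using this
      linarith
    obtain ⟨Ds, hDslim, _⟩ := oneD hε (haff _ (hconv τs hτsT))
    simp only [zero_smul, add_zero] at hDslim
    have hle1 : D ≤ Ds := by
      refine ge_of_tendsto hDslim ?_
      filter_upwards [Ioo_mem_nhdsGT hε] with t ht
      exact hkey2 t ht
    have hle2 : Ds ≤ D := by
      refine le_of_tendsto_of_tendsto hDslim hDlim ?_
      filter_upwards [Ioo_mem_nhdsGT hε] with t ht
      have h1 : h (p + t • v) τs ≤ f (p + t • v) := bound _ (hmem t (hsub t ht)) τs hτsT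
      rw [hτs_act]
      gcongr
      exact ht.1.le
    have hDD : Ds = D := le_antisymm hle2 hle1
    exact ⟨τs, hτsT, hτs_act, hDD ▸ hDslim⟩
end

section
/- Let Ω ⊆ ℝⁿ be an open convex set, T ⊆ ℝ a compact set, and h : ℝⁿ × T → ℝ continuous on Ω × T such that p ↦ h(p, τ) is convex on Ω and differentiable on Ω for every τ ∈ T, and such that for each p ∈ Ω the map τ ↦ ∇_p h(p, τ) is continuous on T. Define f(p) = max_{τ ∈ T} h(p, τ). Then for every p ∈ Ω, ∂f(p) = convexHull{ ∇_p h(p, τ) : τ ∈ T(p) }, where T(p) = {τ ∈ T : h(p, τ) = f(p)}. -/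
open scoped RealInnerProductSpace
open Filter Set

section Aux

variable {E : Type*} [NormedAddCommGroup E] [InnerProductSpace ℝ E] [CompleteSpace E]

lemma line_hasDerivAt' {φ : E → ℝ} {G p : E} (hG : HasGradientAt φ G p) (d : E) :
    HasDerivAt (fun t : ℝ => φ (p + t • d)) ⟪G, d⟫ 0 := by
  have hc : HasDerivAt (fun t : ℝ => p + t • d) d (0:ℝ) := by
    simpa using ((hasDerivAt_id (0:ℝ)).smul_const d).const_add p
  have hfd : HasFDerivAt φ ((InnerProductSpace.toDual ℝ E) G) ((fun t : ℝ => p + t • d) 0) := by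
    simpa using hG.hasFDerivAt
  have hcomp : HasDerivAt (fun t : ℝ => φ (p + t • d)) ((InnerProductSpace.toDual ℝ E) G d) 0 :=
    hfd.comp_hasDerivAt (0:ℝ) hc
  simpa [InnerProductSpace.toDual_apply_apply] using hcomp

lemma line_slope_tendsto' {φ : E → ℝ} {G p : E} (hG : HasGradientAt φ G p) (d : E) :
    Tendsto (fun t : ℝ => (φ (p + t • d) - φ p) / t) (nhdsWithin 0 (Set.Ioi 0)) (nhds ⟪G, d⟫) := by
  have h2 : Tendsto (slope (fun t : ℝ => φ (p + t • d)) 0) (nhdsWithin 0 (Set.Ioi 0))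
      (nhds ⟪G, d⟫) :=
    (hasDerivAt_iff_tendsto_slope.mp (line_hasDerivAt' hG d)).mono_left
      (nhdsWithin_mono 0 (fun t (ht : t ∈ Set.Ioi (0:ℝ)) => ne_of_gt (Set.mem_Ioi.mp ht)))
  refine h2.congr' ?_
  filter_upwards [self_mem_nhdsWithin] with t ht
  simp [slope_def_field, div_eq_iff (ne_of_gt (Set.mem_Ioi.mp ht))]

omit [CompleteSpace E] in
lemma combo_eq' {p q : E} {t : ℝ} : (1 - t) • p + t • q = p + t • (q - p) := by
  rw [smul_sub, sub_smul, one_smul]; abel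

lemma grad_ineq' {Ω : Set E} {φ : E → ℝ} (hc : ConvexOn ℝ Ω φ)
    {G p : E} (hG : HasGradientAt φ G p) (hp : p ∈ Ω) {q : E} (hq : q ∈ Ω) :
    φ p + ⟪G, q - p⟫ ≤ φ q := by
  have key : ⟪G, q - p⟫ ≤ φ q - φ p := by
    refine le_of_tendsto (line_slope_tendsto' hG (q - p)) ?_
    filter_upwards [Ioc_mem_nhdsGT (one_pos : (0:ℝ) < 1)] with t ht
    have hcomb := hc.2 hp hq (by linarith [ht.2] : (0:ℝ) ≤ 1 - t) (le_of_lt ht.1) (by ring)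
    rw [combo_eq'] at hcomb
    rw [div_le_iff₀ ht.1]
    simp only [smul_eq_mul] at hcomb
    nlinarith [hcomb]
  linarith

end Aux

lemma isCompact_convexHull_fd {n : ℕ} {A : Set (EuclideanSpace ℝ (Fin n))} (hA : IsCompact A) :
    IsCompact (convexHull ℝ A) := by
  classical
  rcases A.eq_empty_or_nonempty with rfl | ⟨a0, ha0⟩
  · simpa using isCompact_empty
  set m := n + 1 with hm
  set Φ : (Fin m → ℝ) × (Fin m → EuclideanSpace ℝ (Fin n)) → EuclideanSpace ℝ (Fin n) :=
    fun wx => ∑ i, wx.1 i • wx.2 i with hΦdef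
  have hΦ : Continuous Φ := by
    apply continuous_finset_sum
    intro i _
    exact ((continuous_apply i).comp continuous_fst).smul ((continuous_apply i).comp continuous_snd)
  set D : Set ((Fin m → ℝ) × (Fin m → EuclideanSpace ℝ (Fin n))) :=
    stdSimplex ℝ (Fin m) ×ˢ Set.univ.pi (fun _ => A) with hD
  have hDc : IsCompact D := (isCompact_stdSimplex ℝ _).prod (isCompact_univ_pi fun _ => hA)
  have himg : convexHull ℝ A = Φ '' D := by
    apply Set.Subset.antisymm
    · intro x hx
      obtain ⟨ι, hfin, z, w, hz, hindep, hwpos, hwsum, hxx⟩ :=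
        eq_pos_convex_span_of_mem_convexHull hx
      have hcard : Fintype.card ι ≤ m := by
        have h1 := hindep.card_le_finrank_succ
        have h2 : Module.finrank ℝ (vectorSpan ℝ (Set.range z)) ≤
            Module.finrank ℝ (EuclideanSpace ℝ (Fin n)) := Submodule.finrank_le _
        have h3 : Module.finrank ℝ (EuclideanSpace ℝ (Fin n)) = n := finrank_euclideanSpace_fin
        omega
      obtain ⟨e⟩ : Nonempty (ι ↪ Fin m) :=
        Function.Embedding.nonempty_of_card_le (by simpa using hcard)
      have echoose : ∀ i : ι, (⟨i, rfl⟩ : ∃ i', e i' = e i).choose = i := by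
        intro i
        exact e.injective (⟨i, rfl⟩ : ∃ i', e i' = e i).choose_spec
      set w' : Fin m → ℝ := fun j => if hj : ∃ i, e i = j then w hj.choose else 0 with hw'
      set z' : Fin m → EuclideanSpace ℝ (Fin n) :=
        fun j => if hj : ∃ i, e i = j then z hj.choose else a0 with hz'
      have hwe : ∀ i : ι, w' (e i) = w i := by
        intro i; simp only [hw', dif_pos (⟨i, rfl⟩ : ∃ i', e i' = e i), echoose]
      have hze : ∀ i : ι, z' (e i) = z i := by
        intro i; simp only [hz', dif_pos (⟨i, rfl⟩ : ∃ i', e i' = e i), echoose]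
      have hinj : ∀ x ∈ Finset.univ, ∀ y ∈ Finset.univ, e x = e y → x = y :=
        fun x _ y _ hxy => e.injective hxy
      have hnotmem : ∀ j : Fin m, j ∉ Finset.univ.image e → ¬ ∃ i, e i = j := by
        intro j hj
        simpa [Finset.mem_image] using hj
      have key1 : ∑ j, w' j • z' j = ∑ i, w i • z i := by
        calc ∑ j, w' j • z' j = ∑ j ∈ Finset.univ.image e, w' j • z' j := by
              refine (Finset.sum_subset (Finset.subset_univ _) ?_).symm
              intro j _ hj
              simp [hw', dif_neg (hnotmem j hj)]
          _ = ∑ i, w' (e i) • z' (e i) := Finset.sum_image hinj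
          _ = ∑ i, w i • z i := by simp_rw [hwe, hze]
      have key2 : ∑ j, w' j = 1 := by
        calc ∑ j, w' j = ∑ j ∈ Finset.univ.image e, w' j := by
              refine (Finset.sum_subset (Finset.subset_univ _) ?_).symm
              intro j _ hj
              simp [hw', dif_neg (hnotmem j hj)]
          _ = ∑ i, w' (e i) := Finset.sum_image hinj
          _ = 1 := by simp_rw [hwe]; exact hwsum
      refine ⟨(w', z'), ⟨⟨fun j => ?_, key2⟩, fun j _ => ?_⟩, by simpa [hΦdef, key1] using hxx⟩
      · by_cases hj : ∃ i, e i = j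
        · simp only [hw', dif_pos hj]; exact (hwpos _).le
        · simp [hw', dif_neg hj]
      · by_cases hj : ∃ i, e i = j
        · simp only [hz', dif_pos hj]; exact hz (Set.mem_range_self _)
        · simpa [hz', dif_neg hj] using ha0
    · rintro x ⟨⟨w, zz⟩, ⟨hw, hzz⟩, rfl⟩
      exact (convex_convexHull ℝ A).sum_mem (fun i _ => hw.1 i) hw.2
        (fun i _ => subset_convexHull ℝ A (hzz i (Set.mem_univ i)))
  rw [himg]
  exact hDc.image hΦ

/-- Euclidean instance of the second part of Proposition 4.3: the subdifferential of a
max-function is the convex hull of the gradients of the active functions. -/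
theorem stmt_2 {n : ℕ} (Ω : Set (EuclideanSpace ℝ (Fin n))) (hΩo : IsOpen Ω)
    (hΩc : Convex ℝ Ω) (T : Set ℝ) (hT : IsCompact T) (hTne : T.Nonempty)
    (h : EuclideanSpace ℝ (Fin n) → ℝ → ℝ)
    (g : EuclideanSpace ℝ (Fin n) → ℝ → EuclideanSpace ℝ (Fin n))
    (hcont : ContinuousOn (fun q : EuclideanSpace ℝ (Fin n) × ℝ => h q.1 q.2) (Ω ×ˢ T))
    (hconv : ∀ τ ∈ T, ConvexOn ℝ Ω fun p => h p τ)
    (hdiff : ∀ τ ∈ T, ∀ p ∈ Ω, HasGradientAt (fun p => h p τ) (g p τ) p)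
    (hgcont : ∀ p ∈ Ω, ContinuousOn (fun τ => g p τ) T)
    (f : EuclideanSpace ℝ (Fin n) → ℝ)
    (hf : ∀ p, f p = sSup ((fun τ => h p τ) '' T)) :
    ∀ p ∈ Ω,
      {s : EuclideanSpace ℝ (Fin n) | ∀ q ∈ Ω, f p + ⟪s, q - p⟫ ≤ f q} =
        convexHull ℝ {x | ∃ τ ∈ T, h p τ = f p ∧ g p τ = x} := by
  intro p hp
  have hcont_q : ∀ q ∈ Ω, ContinuousOn (fun τ => h q τ) T := by
    intro q hq
    exact hcont.comp ((continuous_const.prodMk continuous_id).continuousOn)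
      (fun τ hτ => ⟨hq, hτ⟩)
  have hmax : ∀ q ∈ Ω, ∃ τ ∈ T, (∀ σ ∈ T, h q σ ≤ h q τ) ∧ f q = h q τ := by
    intro q hq
    obtain ⟨τ, hτ, hm⟩ := hT.exists_isMaxOn hTne (hcont_q q hq)
    refine ⟨τ, hτ, fun σ hσ => hm hσ, ?_⟩
    rw [hf]
    exact IsGreatest.csSup_eq ⟨Set.mem_image_of_mem _ hτ, by rintro y ⟨σ, hσ, rfl⟩; exact hm hσ⟩
  have hub : ∀ q ∈ Ω, ∀ σ ∈ T, h q σ ≤ f q := by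
    intro q hq σ hσ
    obtain ⟨τ, hτ, hm, hfq⟩ := hmax q hq
    rw [hfq]; exact hm σ hσ
  set A : Set (EuclideanSpace ℝ (Fin n)) := {x | ∃ τ ∈ T, h p τ = f p ∧ g p τ = x} with hAdef
  set Tp : Set ℝ := {τ ∈ T | h p τ = f p} with hTpdef
  have hTpc : IsCompact Tp := by
    have hcs : CompactSpace T := isCompact_iff_compactSpace.mp hT
    have hcl : IsClosed {x : T | h p ↑x = f p} :=
      isClosed_eq (continuousOn_iff_continuous_restrict.mp (hcont_q p hp)) continuous_const
    have himg : IsCompact (Subtype.val '' {x : T | h p ↑x = f p}) :=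
      (hcl.isCompact).image continuous_subtype_val
    convert himg using 1
    ext τ
    simp only [hTpdef, Set.mem_setOf_eq, Set.mem_image, Set.mem_sep_iff]
    constructor
    · rintro ⟨h1, h2⟩; exact ⟨⟨τ, h1⟩, h2, rfl⟩
    · rintro ⟨⟨σ, hσ⟩, h2, rfl⟩; exact ⟨hσ, h2⟩
  have hAimg : A = (fun τ => g p τ) '' Tp := by
    ext x; constructor
    · rintro ⟨τ, hτ, hact, rfl⟩; exact ⟨τ, ⟨hτ, hact⟩, rfl⟩
    · rintro ⟨τ, ⟨hτ, hact⟩, rfl⟩; exact ⟨τ, hτ, hact, rfl⟩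
  have hAc : IsCompact A := by
    rw [hAimg]
    exact hTpc.image_of_continuousOn ((hgcont p hp).mono (fun τ hτ => hτ.1))
  apply Set.Subset.antisymm
  · -- hard direction
    intro s hs
    by_contra hsK
    obtain ⟨ℓ, u, hu1, hu2⟩ := geometric_hahn_banach_closed_point
      (convex_convexHull ℝ A) (isCompact_convexHull_fd hAc).isClosed hsK
    set d := (InnerProductSpace.toDual ℝ (EuclideanSpace ℝ (Fin n))).symm ℓ with hddef
    have hdx : ∀ x, ⟪d, x⟫ = ℓ x := fun x => InnerProductSpace.toDual_symm_apply
    obtain ⟨r, hr, hball⟩ := Metric.isOpen_iff.mp hΩo p hp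
    set t0 := r / (2 * (‖d‖ + 1)) with ht0def
    have hd1 : (0:ℝ) < ‖d‖ + 1 := by positivity
    have ht0pos : 0 < t0 := by positivity
    have hmem : ∀ t : ℝ, 0 ≤ t → t ≤ t0 → p + t • d ∈ Ω := by
      intro t h0 h1
      apply hball
      rw [Metric.mem_ball, dist_eq_norm, add_sub_cancel_left, norm_smul, Real.norm_eq_abs,
        abs_of_nonneg h0]
      have : t * ‖d‖ ≤ t0 * (‖d‖ + 1) := by
        apply mul_le_mul h1 (by linarith [norm_nonneg d]) (norm_nonneg d) ht0pos.le
      have ht0r : t0 * (‖d‖ + 1) = r / 2 := by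
        rw [ht0def]
        field_simp
      linarith
    set tk : ℕ → ℝ := fun k => t0 / (k + 1) with htkdef
    have htkpos : ∀ k, 0 < tk k := fun k => by positivity
    have htkle : ∀ k, tk k ≤ t0 := by
      intro k
      rw [htkdef]
      rw [div_le_iff₀ (by positivity)]
      nlinarith [ht0pos, (Nat.cast_nonneg k : (0:ℝ) ≤ k)]
    have htk0 : Tendsto tk atTop (nhds 0) := by
      have h0 := (tendsto_const_div_atTop_nhds_zero_nat t0).comp (tendsto_add_atTop_nat 1)
      refine h0.congr (fun k => ?_)
      simp only [Function.comp, htkdef]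
      push_cast
      ring
    set qq : ℕ → EuclideanSpace ℝ (Fin n) := fun k => p + tk k • d with hqqdef
    have hqqΩ : ∀ k, qq k ∈ Ω := fun k => hmem _ (htkpos k).le (htkle k)
    choose τi hτiT hτimax hτieq using fun k => hmax (qq k) (hqqΩ k)
    obtain ⟨τs, hτsT, φidx, hφmono, hτconv⟩ := hT.tendsto_subseq hτiT
    have htφ0 : Tendsto (fun j => tk (φidx j)) atTop (nhds 0) :=
      htk0.comp hφmono.tendsto_atTop
    have hq0 : Tendsto (fun j => qq (φidx j)) atTop (nhds p) := by
      have h1 : Tendsto (fun j => tk (φidx j) • d) atTop (nhds ((0:ℝ) • d)) :=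
        htφ0.smul_const d
      rw [zero_smul] at h1
      simpa using (tendsto_const_nhds (x := p)).add h1
    have hjoint : ∀ (q' : ℕ → EuclideanSpace ℝ (Fin n)), (∀ j, q' j ∈ Ω) → ∀ x ∈ Ω,
        Tendsto q' atTop (nhds x) →
        Tendsto (fun j => h (q' j) (τi (φidx j))) atTop (nhds (h x τs)) := by
      intro q' hq' x hx hq'x
      have hpair : Tendsto (fun j => ((q' j, τi (φidx j)) : _ × ℝ)) atTop
          (nhdsWithin (x, τs) (Ω ×ˢ T)) := by
        apply tendsto_nhdsWithin_of_tendsto_nhds_of_eventually_within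
        · exact hq'x.prodMk_nhds hτconv
        · exact Eventually.of_forall fun j => ⟨hq' j, hτiT (φidx j)⟩
      exact (hcont (x, τs) ⟨hx, hτsT⟩).tendsto.comp hpair
    have hsub : ∀ k, f p + tk k * ⟪s, d⟫ ≤ h (qq k) (τi k) := by
      intro k
      have h1 := hs (qq k) (hqqΩ k)
      rw [← hτieq k]
      have h2 : qq k - p = tk k • d := by rw [hqqdef]; simp
      rw [h2, real_inner_smul_right] at h1
      exact h1
    have hτsact : h p τs = f p := by
      have hlim : Tendsto (fun j => h (qq (φidx j)) (τi (φidx j))) atTop (nhds (h p τs)) :=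
        hjoint (fun j => qq (φidx j)) (fun j => hqqΩ _) p hp hq0
      have hge : f p ≤ h p τs := by
        have hlow : Tendsto (fun j => f p + tk (φidx j) * ⟪s, d⟫) atTop (nhds (f p)) := by
          have := (htφ0.mul_const (⟪s, d⟫ : ℝ)).const_add (f p)
          simpa using this
        exact le_of_tendsto_of_tendsto' hlow hlim (fun j => hsub (φidx j))
      exact le_antisymm (hub p hp τs hτsT) hge
    have hkey : ∀ t1, 0 < t1 → t1 ≤ t0 → ⟪s, d⟫ ≤ (h (p + t1 • d) τs - h p τs) / t1 := by
      intro t1 h1 h2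
      have hq1Ω : p + t1 • d ∈ Ω := hmem t1 h1.le h2
      have hbound : ∀ j, tk (φidx j) ≤ t1 →
          ⟪s, d⟫ ≤ (h (p + t1 • d) (τi (φidx j)) - h p (τi (φidx j))) / t1 := by
        intro j hj
        set t := tk (φidx j) with htdef
        have htpos : 0 < t := htkpos _
        have hcomb := (hconv _ (hτiT (φidx j))).2 hp hq1Ω
          (show (0:ℝ) ≤ 1 - t/t1 by
            rw [sub_nonneg]; exact div_le_one_of_le₀ hj h1.le)
          (show (0:ℝ) ≤ t/t1 by positivity) (by ring)
        have hpt : (1 - t/t1) • p + (t/t1) • (p + t1 • d) = p + t • d := by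
          rw [combo_eq']
          rw [add_sub_cancel_left, smul_smul]
          rw [div_mul_cancel₀ _ (ne_of_gt h1)]
        rw [hpt] at hcomb
        simp only [smul_eq_mul] at hcomb
        have hsubk := hsub (φidx j)
        have hubk : h p (τi (φidx j)) ≤ f p := hub p hp _ (hτiT (φidx j))
        rw [le_div_iff₀ h1]
        have hq : qq (φidx j) = p + t • d := rfl
        rw [hq] at hsubk
        -- f p + t ⟪s,d⟫ ≤ h (p+t•d) τ ≤ (1 - t/t1) h p τ + (t/t1) h (p+t1•d) τ
        -- h p τ ≤ f p
        have expand : (1 - t/t1) * h p (τi (φidx j)) + (t/t1) * h (p + t1 • d) (τi (φidx j))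
            = h p (τi (φidx j)) + (t/t1) * (h (p + t1 • d) (τi (φidx j)) - h p (τi (φidx j))) := by
          ring
        rw [expand] at hcomb
        have hchain : f p + t * ⟪s, d⟫ ≤ f p + (t/t1) * (h (p + t1 • d) (τi (φidx j)) - h p (τi (φidx j))) := by
          calc f p + t * ⟪s, d⟫ ≤ h (p + t • d) (τi (φidx j)) := hsubk
            _ ≤ h p (τi (φidx j)) + (t/t1) * (h (p + t1 • d) (τi (φidx j)) - h p (τi (φidx j))) := hcomb
            _ ≤ f p + (t/t1) * (h (p + t1 • d) (τi (φidx j)) - h p (τi (φidx j))) := by linarith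
        set X := h (p + t1 • d) (τi (φidx j)) - h p (τi (φidx j)) with hXdef
        have h3 : t * ⟪s, d⟫ ≤ (t/t1) * X := by rw [hXdef]; linarith [hchain]
        have h4 : t1 * (t * ⟪s, d⟫) ≤ t1 * ((t/t1) * X) :=
          mul_le_mul_of_nonneg_left h3 h1.le
        have h6 : t * (⟪s, d⟫ * t1) ≤ t * X := by
          have e1 : t * (⟪s, d⟫ * t1) = t1 * (t * ⟪s, d⟫) := by ring
          have e2 : t * X = t1 * ((t/t1) * X) := by field_simp
          rw [e1, e2]; exact h4
        exact le_of_mul_le_mul_left h6 htpos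
      have hlimconst : Tendsto (fun j => h (p + t1 • d) (τi (φidx j))) atTop
          (nhds (h (p + t1 • d) τs)) :=
        hjoint (fun _ => p + t1 • d) (fun _ => hq1Ω) _ hq1Ω tendsto_const_nhds
      have hlimp : Tendsto (fun j => h p (τi (φidx j))) atTop (nhds (h p τs)) :=
        hjoint (fun _ => p) (fun _ => hp) p hp tendsto_const_nhds
      have hlim1 : Tendsto (fun j => (h (p + t1 • d) (τi (φidx j)) - h p (τi (φidx j))) / t1)
          atTop (nhds ((h (p + t1 • d) τs - h p τs) / t1)) := (hlimconst.sub hlimp).div_const t1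
      refine ge_of_tendsto hlim1 ?_
      have hev : ∀ᶠ j in atTop, tk (φidx j) < t1 := htφ0.eventually_lt_const h1
      filter_upwards [hev] with j hj using hbound j hj.le
    have hslope := line_slope_tendsto' (hdiff τs hτsT p hp) d
    have hfinal : ⟪s, d⟫ ≤ ⟪g p τs, d⟫ := by
      refine ge_of_tendsto hslope ?_
      filter_upwards [Ioc_mem_nhdsGT ht0pos] with t ht
      exact hkey t ht.1 ht.2
    have hA1 : g p τs ∈ A := ⟨τs, hτsT, hτsact, rfl⟩
    have hlt := hu1 _ (subset_convexHull ℝ A hA1)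
    rw [← hdx (g p τs)] at hlt
    rw [← hdx s] at hu2
    have e1 : ⟪d, g p τs⟫ = ⟪g p τs, d⟫ := real_inner_comm _ _
    have e2 : ⟪d, s⟫ = ⟪s, d⟫ := real_inner_comm _ _
    rw [e1] at hlt
    rw [e2] at hu2
    linarith [hfinal, hlt, hu2]
  · apply convexHull_min
    · rintro x ⟨τ, hτ, hact, rfl⟩ q hq
      have hgi := grad_ineq' (hconv τ hτ) (hdiff τ hτ p hp) hp hq
      calc f p + ⟪g p τ, q - p⟫ = h p τ + ⟪g p τ, q - p⟫ := by rw [hact]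
        _ ≤ h q τ := hgi
        _ ≤ f q := hub q hq τ hτ
    · intro s1 hs1 s2 hs2 a b ha hb hab
      intro q hq
      have h1 := hs1 q hq
      have h2 := hs2 q hq
      have hin : ⟪a • s1 + b • s2, q - p⟫ = a * ⟪s1, q - p⟫ + b * ⟪s2, q - p⟫ := by
        rw [inner_add_left, real_inner_smul_left, real_inner_smul_left]
      have hsum := add_le_add (mul_le_mul_of_nonneg_left h1 ha)
        (mul_le_mul_of_nonneg_left h2 hb)
      have hae : a = 1 - b := by linarith
      have e : f p + (a * ⟪s1, q - p⟫ + b * ⟪s2, q - p⟫) =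
          a * (f p + ⟪s1, q - p⟫) + b * (f p + ⟪s2, q - p⟫) := by
        rw [hae]; ring
      have e2 : a * f q + b * f q = f q := by rw [hae]; ring
      rw [hin, e]
      rw [← e2]
      exact hsum
end

section
/- Let Ω ⊆ ℝⁿ be an open convex set and, for i ∈ I := {1, …, m}, let h_i : ℝⁿ → ℝ be differentiable and convex on Ω. Define h(p) := max_{i ∈ I} h_i(p) and I(p) := {i ∈ I : h_i(p) = h(p)}. Then for every p ∈ Ω, ∂h(p) = convexHull{ ∇h_i(p) : i ∈ I(p) } = { y ∈ ℝⁿ : y = Σ_{i ∈ I(p)} α_i·∇h_i(p) with α_i ≥ 0 and Σ_{i ∈ I(p)} α_i = 1 }. In particular, p minimizes h on Ω if and only if there exist α_i ≥ 0, i ∈ I(p), with Σ_{i ∈ I(p)} α_i = 1 and Σ_{i ∈ I(p)} α_i·∇h_i(p) = 0. -/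
open scoped RealInnerProductSpace
open Filter Topology

section Helpers
variable {E : Type*} [NormedAddCommGroup E] [InnerProductSpace ℝ E] [CompleteSpace E]

lemma hasDerivAt_line {f : E → ℝ} {G p : E} (hf : HasGradientAt f G p) (v : E) :
    HasDerivAt (fun t : ℝ => f (p + t • v)) ⟪G, v⟫ 0 := by
  have hγ : HasDerivAt (fun t : ℝ => p + t • v) v 0 := by
    simpa using ((hasDerivAt_id (0:ℝ)).smul_const v).const_add p
  have hf' : HasFDerivAt f (InnerProductSpace.toDual ℝ E G) (p + (0:ℝ) • v) := by
    simpa using hf.hasFDerivAt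
  have := hf'.comp_hasDerivAt 0 hγ
  simp at this
  exact this

lemma convexOn_inner_grad_le {Ω : Set E} {f : E → ℝ} {G p q : E}
    (hc : ConvexOn ℝ Ω f) (hG : HasGradientAt f G p) (hp : p ∈ Ω) (hq : q ∈ Ω) :
    f p + ⟪G, q - p⟫ ≤ f q := by
  set φ : ℝ → ℝ := fun t => f (p + t • (q - p)) with hφ
  have hder : HasDerivAt φ ⟪G, q - p⟫ 0 := hasDerivAt_line hG (q - p)
  have hslope : Tendsto (slope φ 0) (𝓝[>] (0:ℝ)) (𝓝 ⟪G, q - p⟫) :=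
    (hasDerivAt_iff_tendsto_slope.1 hder).mono_left
      (nhdsWithin_mono _ fun t ht => ne_of_gt ht)
  have key : ∀ᶠ t in 𝓝[>] (0:ℝ), slope φ 0 t ≤ f q - f p := by
    filter_upwards [Ioo_mem_nhdsGT_of_mem (Set.left_mem_Ico.2 one_pos)] with t ht
    have h1 : φ t ≤ (1 - t) * f p + t * f q := by
      have := hc.2 hp hq (by linarith [ht.2] : (0:ℝ) ≤ 1 - t) ht.1.le (by ring)
      have hpt : (1 - t) • p + t • q = p + t • (q - p) := by
        simp [smul_sub, sub_smul]; abel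
      simpa [hpt, smul_eq_mul] using this
    have hφ0 : φ 0 = f p := by simp [hφ]
    have hsl : slope φ 0 t = (φ t - φ 0) / t := by rw [slope_def_field, sub_zero]
    rw [hsl, div_le_iff₀ ht.1, hφ0]
    nlinarith [ht.1]
  have := le_of_tendsto hslope key
  linarith

end Helpers

/-- Euclidean instance of Corollary 4.1: subdifferential of the max of finitely many
differentiable convex functions, and the optimality condition. -/
theorem stmt_3 {n : ℕ} {ι : Type*} [Fintype ι] [Nonempty ι]
    (Ω : Set (EuclideanSpace ℝ (Fin n))) (hΩo : IsOpen Ω) (hΩc : Convex ℝ Ω)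
    (h : ι → EuclideanSpace ℝ (Fin n) → ℝ)
    (g : ι → EuclideanSpace ℝ (Fin n) → EuclideanSpace ℝ (Fin n))
    (hdiff : ∀ i, ∀ p ∈ Ω, HasGradientAt (h i) (g i p) p)
    (hconv : ∀ i, ConvexOn ℝ Ω (h i))
    (H : EuclideanSpace ℝ (Fin n) → ℝ)
    (hH : ∀ p, H p = Finset.univ.sup' Finset.univ_nonempty fun i => h i p) :
    ∀ p ∈ Ω,
      ({s : EuclideanSpace ℝ (Fin n) | ∀ q ∈ Ω, H p + ⟪s, q - p⟫ ≤ H q} =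
        convexHull ℝ {x | ∃ i, h i p = H p ∧ g i p = x}) ∧
      ({s : EuclideanSpace ℝ (Fin n) | ∀ q ∈ Ω, H p + ⟪s, q - p⟫ ≤ H q} =
        {y | ∃ α : ι → ℝ, (∀ i, 0 ≤ α i) ∧ (∀ i, h i p ≠ H p → α i = 0) ∧
          ∑ i, α i = 1 ∧ y = ∑ i, α i • g i p}) ∧
      ((∀ q ∈ Ω, H p ≤ H q) ↔
        ∃ α : ι → ℝ, (∀ i, 0 ≤ α i) ∧ (∀ i, h i p ≠ H p → α i = 0) ∧
          ∑ i, α i = 1 ∧ ∑ i, α i • g i p = 0) := by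
  classical
  intro p hp
  set S : Set (EuclideanSpace ℝ (Fin n)) := {s : EuclideanSpace ℝ (Fin n) | ∀ q ∈ Ω, H p + ⟪s, q - p⟫ ≤ H q} with hS
  set A : Set (EuclideanSpace ℝ (Fin n)) := {x | ∃ i, h i p = H p ∧ g i p = x} with hA
  set W : Set (EuclideanSpace ℝ (Fin n)) := {y | ∃ α : ι → ℝ, (∀ i, 0 ≤ α i) ∧ (∀ i, h i p ≠ H p → α i = 0) ∧
      ∑ i, α i = 1 ∧ y = ∑ i, α i • g i p} with hW
  have hle : ∀ i q, h i q ≤ H q := fun i q => by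
    rw [hH q]; exact Finset.le_sup' (fun i => h i q) (Finset.mem_univ i)
  have hsub : ∀ i, ∀ q ∈ Ω, h i p + ⟪g i p, q - p⟫ ≤ h i q := fun i q hq =>
    convexOn_inner_grad_le (hconv i) (hdiff i p hp) hp hq
  -- W ⊆ S
  have hWS : W ⊆ S := by
    rintro y ⟨α, hα0, hαz, hα1, rfl⟩ q hq
    have hin : ⟪∑ i, α i • g i p, q - p⟫ = ∑ i, α i * ⟪g i p, q - p⟫ := by
      rw [sum_inner]; exact Finset.sum_congr rfl fun i _ => real_inner_smul_left _ _ _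
    have hterm : ∀ i ∈ Finset.univ, α i * ⟪g i p, q - p⟫ ≤ α i * (H q - H p) := by
      intro i _
      rcases eq_or_ne (α i) 0 with h0 | h0
      · simp [h0]
      · have hact : h i p = H p := by by_contra hc; exact h0 (hαz i hc)
        have hgq : ⟪g i p, q - p⟫ ≤ H q - H p := by
          linarith [hsub i q hq, hle i q, hact]
        exact mul_le_mul_of_nonneg_left hgq (hα0 i)
    calc H p + ⟪∑ i, α i • g i p, q - p⟫ ≤ H p + ∑ i, α i * (H q - H p) := by
          rw [hin]; exact add_le_add_right (Finset.sum_le_sum hterm) _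
      _ = H q := by rw [← Finset.sum_mul, hα1]; ring
  -- A ⊆ W
  have hAW : A ⊆ W := by
    rintro x ⟨i, hact, rfl⟩
    refine ⟨fun j => if j = i then 1 else 0, fun j => by by_cases hji : j = i <;> simp [hji], fun j hj => ?_, by simp, by simp⟩
    · rcases eq_or_ne j i with rfl | hne
      · exact absurd hact hj
      · simp [hne]
  -- W convex
  have hWc : Convex ℝ W := by
    rintro y ⟨α, hα0, hαz, hα1, rfl⟩ z ⟨β, hβ0, hβz, hβ1, rfl⟩ a b ha hb hab
    refine ⟨fun i => a * α i + b * β i,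
      fun i => add_nonneg (mul_nonneg ha (hα0 i)) (mul_nonneg hb (hβ0 i)),
      fun i hi => by simp [hαz i hi, hβz i hi], ?_, ?_⟩
    · simp only [Finset.sum_add_distrib, ← Finset.mul_sum, hα1, hβ1]; linarith
    · rw [Finset.smul_sum, Finset.smul_sum, ← Finset.sum_add_distrib]
      exact Finset.sum_congr rfl fun i _ => by rw [smul_smul, smul_smul, add_smul]
  have hhullW : convexHull ℝ A ⊆ W := convexHull_min hAW hWc
  -- S ⊆ convexHull A
  have hShull : S ⊆ convexHull ℝ A := by
    intro s hs
    by_contra hsC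
    have hAfin : A.Finite := Set.Finite.subset (Set.finite_range fun i => g i p)
      (by rintro x ⟨i, _, rfl⟩; exact Set.mem_range_self i)
    obtain ⟨f, u, hfu, hus⟩ := geometric_hahn_banach_closed_point
      (convex_convexHull ℝ A) (hAfin.isClosed_convexHull (𝕜 := ℝ)) hsC
    set v : EuclideanSpace ℝ (Fin n) := (InnerProductSpace.toDual ℝ (EuclideanSpace ℝ (Fin n))).symm f with hv
    have hvx : ∀ x : EuclideanSpace ℝ (Fin n), ⟪v, x⟫ = f x := fun x => InnerProductSpace.toDual_symm_apply (𝕜 := ℝ)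
    set L : ℝ := ⟪v, s⟫ with hL
    have huL : u < L := by rw [hL, hvx]; exact hus
    have ev0 : ∀ᶠ t in 𝓝[>] (0:ℝ), p + t • v ∈ Ω := by
      have hc : Tendsto (fun t : ℝ => p + t • v) (𝓝[>] (0:ℝ)) (𝓝 p) := by
        have : Continuous (fun t : ℝ => p + t • v) :=
          continuous_const.add (continuous_id.smul continuous_const)
        exact (this.tendsto' 0 p (by simp)).mono_left nhdsWithin_le_nhds
      exact hc (hΩo.mem_nhds hp)
    have evi : ∀ i, ∀ᶠ t in 𝓝[>] (0:ℝ), h i (p + t • v) < H p + t * L := by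
      intro i
      have hder : HasDerivAt (fun t : ℝ => h i (p + t • v)) ⟪g i p, v⟫ 0 :=
        hasDerivAt_line (hdiff i p hp) v
      rcases eq_or_ne (h i p) (H p) with hact | hact
      · -- active: slope tends to ⟪g i p, v⟫ < L
        have hgl : ⟪g i p, v⟫ < L := by
          have : g i p ∈ A := ⟨i, hact, rfl⟩
          have := hfu _ (subset_convexHull ℝ A this)
          rw [real_inner_comm, hvx]; linarith
        have hslope : Tendsto (slope (fun t : ℝ => h i (p + t • v)) 0) (𝓝[>] (0:ℝ))
            (𝓝 ⟪g i p, v⟫) :=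
          (hasDerivAt_iff_tendsto_slope.1 hder).mono_left
            (nhdsWithin_mono _ fun t ht => ne_of_gt ht)
        filter_upwards [hslope.eventually_lt_const hgl, self_mem_nhdsWithin] with t hts ht
        have ht' : (0:ℝ) < t := ht
        have hsl : slope (fun t : ℝ => h i (p + t • v)) 0 t
            = (h i (p + t • v) - h i p) / t := by
          rw [slope_def_field, sub_zero]; simp
        rw [hsl, div_lt_iff₀ ht'] at hts
        rw [hact] at hts
        nlinarith [hts]
      · -- inactive: continuity
        have hlt : h i p < H p := lt_of_le_of_ne (hle i p) hact
        have hct : Tendsto (fun t : ℝ => h i (p + t • v) - t * L) (𝓝 (0:ℝ)) (𝓝 (h i p)) := by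
          have h1 : Tendsto (fun t : ℝ => h i (p + t • v)) (𝓝 (0:ℝ)) (𝓝 (h i p)) := by
            have := hder.continuousAt.tendsto
            simpa using this
          have h2 : Tendsto (fun t : ℝ => t * L) (𝓝 (0:ℝ)) (𝓝 0) := by
            simpa using (continuous_mul_right L).tendsto' 0 0 (by simp)
          simpa using h1.sub h2
        filter_upwards [(hct.eventually_lt_const hlt).filter_mono nhdsWithin_le_nhds] with t ht
        linarith
    obtain ⟨t, ⟨hqΩ, hlt⟩, htpos⟩ :=
      ((ev0.and ((eventually_all).2 evi)).and self_mem_nhdsWithin).exists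
    have h1 : H p + ⟪s, (p + t • v) - p⟫ ≤ H (p + t • v) := hs _ hqΩ
    rw [add_sub_cancel_left, real_inner_smul_right, real_inner_comm, ← hL] at h1
    have h2 : H (p + t • v) < H p + t * L := by
      rw [hH]
      exact (Finset.sup'_lt_iff _).2 fun i _ => hlt i
    linarith
  have hSW : S = W := Set.Subset.antisymm (fun s hs => hhullW (hShull hs)) hWS
  have hSH : S = convexHull ℝ A :=
    Set.Subset.antisymm hShull fun x hx => hWS (hhullW hx)
  refine ⟨hSH, hSW, ?_⟩
  constructor
  · intro hmin
    have h0 : (0 : EuclideanSpace ℝ (Fin n)) ∈ S := fun q hq => by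
      simpa using hmin q hq
    rw [hSW] at h0
    obtain ⟨α, h1, h2, h3, h4⟩ := h0
    exact ⟨α, h1, h2, h3, h4.symm⟩
  · rintro ⟨α, h1, h2, h3, h4⟩
    have h0 : (0 : EuclideanSpace ℝ (Fin n)) ∈ W := ⟨α, h1, h2, h3, h4.symm⟩
    intro q hq
    simpa using hWS h0 q hq
end

section
/- Let Ω ⊆ ℝⁿ be an open convex set, I = {1, …, m}, and for each i ∈ I let f_i : ℝⁿ → ℝ be continuously differentiable on Ω with ∇f_i Lipschitz on Ω with constant L_i, and continuous on the closure of Ω. Define f(p) := max_{i ∈ I} f_i(p). Assume inf_{p ∈ ℝⁿ} f(p) > −∞ and that there is q ∈ ℝⁿ with inf_{p ∈ ℝⁿ} f(p) < f(q) and {p ∈ ℝⁿ : f(p) ≤ f(q)} ⊆ Ω. Let λ̄ > 0 and (λ_k) satisfy max_{i ∈ I} L_i < λ_k ≤ λ̄ for all k, let p⁰ ∈ {p : f(p) ≤ f(q)}, and let (p^k) be a sequence such that for every k, p^{k+1} is a global minimizer over ℝⁿ of p ↦ f(p) + (λ_k/2)·‖p − p^k‖². Then p^k ∈ {p : f(p)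 ≤ f(q)} for all k, and every accumulation point p̄ of (p^k) is a stationary point of f in the following sense: there exist reals α_i ≥ 0 for i ∈ I(p̄) := {i ∈ I : f_i(p̄) = f(p̄)} with Σ_{i ∈ I(p̄)} α_i = 1 and Σ_{i ∈ I(p̄)} α_i·∇f_i(p̄) = 0. -/
open Filter

/-- Euclidean instance of the first part of Theorem 5.1 (MPP10): the proximal point
sequence stays in the sublevel set of `q` and each of its accumulation points is a
stationary point of `F = maxᵢ fᵢ`. -/
theorem stmt_7 {n : ℕ} {ι : Type*} [Fintype ι] [Nonempty ι]
    (Ω : Set (EuclideanSpace ℝ (Fin n))) (hΩo : IsOpen Ω) (hΩc : Convex ℝ Ω)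
    (f : ι → EuclideanSpace ℝ (Fin n) → ℝ)
    (g : ι → EuclideanSpace ℝ (Fin n) → EuclideanSpace ℝ (Fin n)) (L : ι → ℝ)
    (hdiff : ∀ i, ∀ x ∈ Ω, HasGradientAt (f i) (g i x) x)
    (hgcont : ∀ i, ContinuousOn (g i) Ω)
    (hLip : ∀ i, ∀ x ∈ Ω, ∀ y ∈ Ω, ‖g i x - g i y‖ ≤ L i * ‖x - y‖)
    (hfcont : ∀ i, ContinuousOn (f i) (closure Ω))
    (F : EuclideanSpace ℝ (Fin n) → ℝ)
    (hF : ∀ x, F x = Finset.univ.sup' Finset.univ_nonempty fun i => f i x)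
    (hbdd : BddBelow (Set.range F))
    (q : EuclideanSpace ℝ (Fin n)) (hq1 : ∃ x, F x < F q)
    (hq2 : {x | F x ≤ F q} ⊆ Ω)
    (lamUp : ℝ) (lam : ℕ → ℝ)
    (hlam : ∀ k, Finset.univ.sup' Finset.univ_nonempty L < lam k ∧ lam k ≤ lamUp)
    (p : ℕ → EuclideanSpace ℝ (Fin n)) (hp0 : F (p 0) ≤ F q)
    (hprox : ∀ k, ∀ x, F (p (k + 1)) + lam k / 2 * ‖p (k + 1) - p k‖ ^ 2 ≤
      F x + lam k / 2 * ‖x - p k‖ ^ 2) :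
    (∀ k, F (p k) ≤ F q) ∧
    ∀ pbar : EuclideanSpace ℝ (Fin n),
      (∃ φ : ℕ → ℕ, StrictMono φ ∧ Tendsto (fun s => p (φ s)) atTop (nhds pbar)) →
      ∃ α : ι → ℝ, (∀ i, 0 ≤ α i) ∧ (∀ i, f i pbar ≠ F pbar → α i = 0) ∧
        ∑ i, α i = 1 ∧ ∑ i, α i • g i pbar = 0 := by
  classical
  obtain ⟨x0, hx0⟩ := hq1
  have hx0Ω : x0 ∈ Ω := hq2 (Set.mem_setOf_eq ▸ le_of_lt hx0)
  have hqΩ : q ∈ Ω := hq2 (Set.mem_setOf_eq ▸ le_refl (F q))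
  have hx0q : x0 ≠ q := fun h => absurd hx0 (by simp [h])
  have hsupL : (0:ℝ) ≤ Finset.univ.sup' Finset.univ_nonempty L := by
    obtain ⟨i⟩ := (inferInstance : Nonempty ι)
    have h1 : (0:ℝ) ≤ ‖g i x0 - g i q‖ := norm_nonneg _
    have h2 := hLip i x0 hx0Ω q hqΩ
    have h3 : 0 < ‖x0 - q‖ := by
      rw [norm_pos_iff]; exact sub_ne_zero_of_ne hx0q
    have hLi : 0 ≤ L i := by nlinarith
    exact le_trans hLi (Finset.le_sup' _ (Finset.mem_univ i))
  have hlam0 : ∀ k, 0 < lam k := fun k => lt_of_le_of_lt hsupL (hlam k).1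
  have hmono : ∀ k, F (p (k+1)) ≤ F (p k) := by
    intro k
    have h := hprox k (p k)
    simp only [sub_self, norm_zero] at h
    nlinarith [sq_nonneg ‖p (k+1) - p k‖, hlam0 k]
  have part1 : ∀ k, F (p k) ≤ F q := by
    intro k; induction k with
    | zero => exact hp0
    | succ k ih => exact le_trans (hmono k) ih
  refine ⟨part1, ?_⟩
  rintro pbar ⟨φ, hφ, hconv⟩
  have hFc : ContinuousOn F (closure Ω) := by
    have : ContinuousOn (fun x => Finset.univ.sup' Finset.univ_nonempty fun i => f i x)
        (closure Ω) :=
      ContinuousOn.finset_sup'_apply Finset.univ_nonempty fun i _ => hfcont i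
    exact this.congr fun x _ => hF x
  have hcl : ∀ s, p (φ s) ∈ Ω := fun s => hq2 (Set.mem_setOf_eq ▸ part1 _)
  have hpbar_cl : pbar ∈ closure Ω :=
    mem_closure_of_tendsto hconv (Eventually.of_forall fun s => hcl s)
  have htendF : Tendsto (fun s => F (p (φ s))) atTop (nhds (F pbar)) := by
    have h1 : Tendsto (fun s => p (φ s)) atTop (nhdsWithin pbar (closure Ω)) :=
      tendsto_nhdsWithin_of_tendsto_nhds_of_eventually_within _ hconv
        (Eventually.of_forall fun s => subset_closure (hcl s))
    exact (hFc pbar hpbar_cl).tendsto.comp h1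
  set Fs : ℕ → ℝ := fun k => F (p k) with hFs
  have hanti : Antitone Fs := antitone_nat_of_succ_le hmono
  have hbddFs : BddBelow (Set.range Fs) := by
    obtain ⟨c, hc⟩ := hbdd
    exact ⟨c, fun y ⟨k, hk⟩ => hk ▸ hc (Set.mem_range_self (p k))⟩
  have htend : Tendsto Fs atTop (nhds (⨅ k, Fs k)) := tendsto_atTop_ciInf hanti hbddFs
  have hFpbar : F pbar = ⨅ k, Fs k :=
    tendsto_nhds_unique htendF (htend.comp hφ.tendsto_atTop)
  have hFpbarq : F pbar ≤ F q := by
    rw [hFpbar]; exact ciInf_le_of_le hbddFs 0 hp0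
  have hpbarΩ : pbar ∈ Ω := hq2 (Set.mem_setOf_eq ▸ hFpbarq)
  have hkey : ∀ x, F pbar ≤ F x + lamUp / 2 * ‖x - pbar‖^2 := by
    intro x
    have hs : ∀ s, F pbar ≤ F x + lamUp / 2 * ‖x - p (φ s)‖^2 := by
      intro s
      have h1 : F pbar ≤ F (p (φ s + 1)) := by
        rw [hFpbar]; exact ciInf_le hbddFs (φ s + 1)
      have h2 := hprox (φ s) x
      have h3 : 0 ≤ lam (φ s) / 2 * ‖p (φ s + 1) - p (φ s)‖^2 := by
        have := hlam0 (φ s); positivity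
      have h4 : lam (φ s) / 2 * ‖x - p (φ s)‖^2 ≤ lamUp / 2 * ‖x - p (φ s)‖^2 := by
        have := (hlam (φ s)).2
        nlinarith [sq_nonneg ‖x - p (φ s)‖]
      linarith
    have htendrhs : Tendsto (fun s => F x + lamUp / 2 * ‖x - p (φ s)‖^2) atTop
        (nhds (F x + lamUp / 2 * ‖x - pbar‖^2)) := by
      have h0 : Tendsto (fun s => ‖x - p (φ s)‖^2) atTop (nhds (‖x - pbar‖^2)) :=
        ((tendsto_const_nhds.sub hconv).norm).pow 2
      exact (h0.const_mul _).const_add _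
    exact ge_of_tendsto htendrhs (Eventually.of_forall hs)
  -- stationarity
  set v : ι → EuclideanSpace ℝ (Fin n) := fun i => g i pbar with hv
  set A : Finset ι := Finset.univ.filter fun i => f i pbar = F pbar with hA
  have hAmem : ∀ i, i ∈ A ↔ f i pbar = F pbar := by
    intro i; simp [hA]
  set S : Set (ι → ℝ) :=
    {α | (∀ i, 0 ≤ α i) ∧ (∀ i, i ∉ A → α i = 0) ∧ ∑ i, α i = 1} with hS
  set T : (ι → ℝ) → EuclideanSpace ℝ (Fin n) := fun α => ∑ i, α i • v i with hT
  have hTcont : Continuous T :=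
    continuous_finset_sum _ fun i _ => (continuous_apply i).smul continuous_const
  have hSsub : S ⊆ stdSimplex ℝ ι := fun α hα => ⟨hα.1, hα.2.2⟩
  have hSclosed : IsClosed S := by
    have h1 : IsClosed {α : ι → ℝ | ∀ i, 0 ≤ α i} := by
      rw [Set.setOf_forall]
      exact isClosed_iInter fun i => isClosed_le continuous_const (continuous_apply i)
    have h2 : IsClosed {α : ι → ℝ | ∀ i, i ∉ A → α i = 0} := by
      rw [Set.setOf_forall]
      refine isClosed_iInter fun i => ?_
      by_cases hi : i ∈ A
      · have he : {α : ι → ℝ | i ∉ A → α i = 0} = Set.univ := by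
          ext α; simp [hi]
        rw [he]; exact isClosed_univ
      · have he : {α : ι → ℝ | i ∉ A → α i = 0} = {α : ι → ℝ | α i = 0} := by
          ext α; simp [hi]
        rw [he]; exact isClosed_eq (continuous_apply i) continuous_const
    have h3 : IsClosed {α : ι → ℝ | ∑ i, α i = 1} :=
      isClosed_eq (continuous_finset_sum _ fun i _ => continuous_apply i) continuous_const
    exact h1.inter (h2.inter h3)
  have hScompact : IsCompact S :=
    (isCompact_stdSimplex ℝ ι).of_isClosed_subset hSclosed hSsub
  have hKcompact : IsCompact (T '' S) := hScompact.image hTcont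
  have hKclosed : IsClosed (T '' S) := hKcompact.isClosed
  have hKconvex : Convex ℝ (T '' S) := by
    rintro x ⟨a, ha, rfl⟩ y ⟨b, hb, rfl⟩ s t hs ht hst
    refine ⟨s • a + t • b, ⟨?_, ?_, ?_⟩, ?_⟩
    · intro i
      have := ha.1 i; have := hb.1 i
      simp only [Pi.add_apply, Pi.smul_apply, smul_eq_mul]
      nlinarith
    · intro i hi
      simp [ha.2.1 i hi, hb.2.1 i hi]
    · simp only [Pi.add_apply, Pi.smul_apply, smul_eq_mul, Finset.sum_add_distrib,
        ← Finset.mul_sum, ha.2.2, hb.2.2, mul_one]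
      exact hst
    · simp only [hT, Pi.add_apply, Pi.smul_apply, smul_eq_mul, add_smul, mul_smul,
        Finset.sum_add_distrib, Finset.smul_sum]
  have hvK : ∀ i ∈ A, v i ∈ T '' S := by
    intro i hi
    refine ⟨fun j => if j = i then 1 else 0, ⟨?_, ?_, ?_⟩, ?_⟩
    · intro j; positivity
    · intro j hj
      simp only [ite_eq_right_iff]
      intro hji; exact absurd (hji ▸ hi) hj
    · simp
    · simp [hT, ite_smul]
  have h0K : (0 : EuclideanSpace ℝ (Fin n)) ∈ T '' S := by
    by_contra h0
    obtain ⟨ℓ, u, h0u, hKu⟩ := geometric_hahn_banach_point_closed hKconvex hKclosed h0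
    rw [map_zero] at h0u
    set d : EuclideanSpace ℝ (Fin n) :=
      -((InnerProductSpace.toDual ℝ (EuclideanSpace ℝ (Fin n))).symm ℓ) with hd_def
    have hd : ∀ i ∈ A, inner ℝ (v i) d < -u := by
      intro i hi
      have h := hKu _ (hvK i hi)
      have : inner ℝ (v i) d = -(ℓ (v i)) := by
        rw [real_inner_comm, hd_def, inner_neg_left, InnerProductSpace.toDual_symm_apply]
      rw [this]
      linarith
    set c : ℝ → EuclideanSpace ℝ (Fin n) := fun t => pbar + t • d with hc_def
    have hc : ∀ t : ℝ, HasDerivAt c d t := by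
      intro t
      rw [hc_def]
      simpa using ((hasDerivAt_id t).smul_const d).const_add pbar
    have hc0 : c 0 = pbar := by simp [hc_def]
    have hquad : HasDerivAt (fun t : ℝ => lamUp / 2 * (t ^ 2 * ‖d‖ ^ 2)) 0 0 := by
      have h := ((hasDerivAt_pow 2 (0:ℝ)).mul_const (‖d‖ ^ 2)).const_mul (lamUp / 2)
      simpa using h
    set χ : ι → ℝ → ℝ := fun i t => f i (c t) + lamUp / 2 * (t ^ 2 * ‖d‖ ^ 2) with hχ
    have hev : ∀ i : ι, ∀ᶠ t in nhdsWithin (0:ℝ) (Set.Ioi 0), χ i t < F pbar := by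
      intro i
      by_cases hi : i ∈ A
      · have hgi : HasGradientAt (f i) (v i) pbar := hdiff i pbar hpbarΩ
        have hfd : HasFDerivAt (f i)
            (InnerProductSpace.toDual ℝ (EuclideanSpace ℝ (Fin n)) (v i)) pbar :=
          hgi.hasFDerivAt
        have hcomp : HasDerivAt (fun t => f i (c t)) (inner ℝ (v i) d : ℝ) 0 := by
          have hfd' : HasFDerivAt (f i)
              (InnerProductSpace.toDual ℝ (EuclideanSpace ℝ (Fin n)) (v i)) (c 0) :=
            hc0.symm ▸ hfd
          have h := hfd'.comp_hasDerivAt 0 (hc 0)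
          simp only [InnerProductSpace.toDual_apply_apply] at h
          exact h
        have hχd : HasDerivAt (χ i) (inner ℝ (v i) d : ℝ) 0 := by
          have h := hcomp.add hquad
          simp only [add_zero] at h
          exact h
        have hu0 : 0 < u := h0u
        have hneg : (inner ℝ (v i) d : ℝ) < 0 := lt_trans (hd i hi) (by linarith)
        have hslope := hasDerivAt_iff_tendsto_slope.mp hχd
        have hev1 : ∀ᶠ t in nhdsWithin (0:ℝ) {(0:ℝ)}ᶜ, slope (χ i) 0 t < 0 :=
          hslope.eventually_lt_const hneg
        have hev2 : ∀ᶠ t in nhdsWithin (0:ℝ) (Set.Ioi 0), slope (χ i) 0 t < 0 :=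
          hev1.filter_mono (nhdsWithin_mono 0 fun t ht => ne_of_gt ht)
        filter_upwards [hev2, self_mem_nhdsWithin] with t hst ht
        have ht0 : (0:ℝ) < t := ht
        have hχ0 : χ i 0 = F pbar := by
          simp [hχ, hc0, (hAmem i).mp hi]
        have hsl : (χ i t - χ i 0) / t < 0 := by
          simpa [slope_def_field, sub_zero] using hst
        have := div_neg_iff.mp hsl
        rcases this with ⟨h1, h2⟩ | ⟨h1, h2⟩
        · linarith
        · linarith
      · have hle : f i pbar ≤ F pbar := by
          rw [hF]; exact Finset.le_sup' (fun j => f j pbar) (Finset.mem_univ i)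
        have hlt : f i pbar < F pbar :=
          lt_of_le_of_ne hle fun h => hi ((hAmem i).mpr h)
        have hconti : ContinuousAt (χ i) 0 := by
          have h2 : ContinuousAt c 0 := (hc 0).continuousAt
          have h1 : ContinuousAt (f i) (c 0) :=
            hc0.symm ▸ (hdiff i pbar hpbarΩ).continuousAt
          exact (h1.comp h2).add (by fun_prop)
        have hχ0 : χ i 0 = f i pbar := by simp [hχ, hc0]
        have : ∀ᶠ t in nhds (0:ℝ), χ i t < F pbar := by
          have h3 : Tendsto (χ i) (nhds 0) (nhds (f i pbar)) := by
            rw [← hχ0]; exact hconti.tendsto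
          exact h3.eventually_lt_const hlt
        exact this.filter_mono nhdsWithin_le_nhds
    have hall : ∀ᶠ t in nhdsWithin (0:ℝ) (Set.Ioi 0), ∀ i, χ i t < F pbar :=
      eventually_all.mpr hev
    obtain ⟨t, hts, ht0⟩ := (hall.and self_mem_nhdsWithin).exists
    have ht0' : (0:ℝ) < t := ht0
    have hnorm : ‖c t - pbar‖ ^ 2 = t ^ 2 * ‖d‖ ^ 2 := by
      simp only [hc_def, add_sub_cancel_left, norm_smul, Real.norm_eq_abs, mul_pow, sq_abs]
    have hFct : F (c t) + lamUp / 2 * (t ^ 2 * ‖d‖ ^ 2) < F pbar := by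
      have hsup : Finset.univ.sup' Finset.univ_nonempty (fun i => f i (c t)) <
          F pbar - lamUp / 2 * (t ^ 2 * ‖d‖ ^ 2) := by
        rw [Finset.sup'_lt_iff]
        intro i _
        have := hts i
        simp only [hχ] at this
        linarith
      rw [hF (c t)]
      linarith
    have := hkey (c t)
    rw [hnorm] at this
    linarith
  obtain ⟨α, ⟨hα0, hαA, hα1⟩, hsum⟩ := h0K
  exact ⟨α, hα0, fun i hi => hαA i fun hmem => hi ((hAmem i).mp hmem), hα1, hsum⟩
end

section
/- Let Ω ⊆ ℝⁿ be an open convex set, I = {1, …, m}, and for each i ∈ I let f_i : ℝⁿ → ℝ be continuously differentiable on Ω with ∇f_i Lipschitz on Ω with constant L_i. Define f(p) := max_{i ∈ I} f_i(p). Assume inf_{p ∈ ℝⁿ} f(p) > −∞, there is q with inf f < f(q) and {p : f(p) ≤ f(q)} ⊆ Ω, and let c ∈ (inf f, f(q)). Suppose there exists δ > 0 such that for every p ∈ {p : f(p) ≤ f(q)} \ {p : f(p) ≤ c} and every y ∈ convexHull{ ∇f_i(p) : i ∈ I(p) }, one has ‖y‖ > δ. Let λ̄ > 0, let (λ_k)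 satisfy max_{i ∈ I} L_i < λ_k ≤ λ̄ for all k, let p⁰ ∈ {p : f(p) ≤ f(q)}, and let (p^k) be a sequence such that for every k, p^{k+1} is a global minimizer over ℝⁿ of p ↦ f(p) + (λ_k/2)·‖p − p^k‖². Then after finitely many steps the iterates enter the sublevel set {p : f(p) ≤ c}, i.e. there exists k₀ with f(p^k) ≤ c for all k ≥ k₀. -/
local notation "⟪" x ", " y "⟫" => @inner ℝ _ _ x y
open Filter Topology

/-- Descent lemma: for a function with `L`-Lipschitz gradient on a convex set. -/
lemma descent_aux {E : Type*} [NormedAddCommGroup E] [InnerProductSpace ℝ E] [CompleteSpace E]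
    {Ω : Set E} (hΩc : Convex ℝ Ω) {f : E → ℝ} {g : E → E} {L : ℝ} (hL : 0 ≤ L)
    (hdiff : ∀ x ∈ Ω, HasGradientAt f (g x) x)
    (hLip : ∀ x ∈ Ω, ∀ y ∈ Ω, ‖g x - g y‖ ≤ L * ‖x - y‖)
    {x y : E} (hx : x ∈ Ω) (hy : y ∈ Ω) :
    f y ≤ f x + ⟪g x, y - x⟫ + L * ‖y - x‖ ^ 2 := by
  set s : Set E := segment ℝ x y with hs
  have hsubΩ : s ⊆ Ω := hΩc.segment_subset hx hy
  set T := InnerProductSpace.toDual ℝ E with hT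
  set h : E → ℝ := fun u => f u - ⟪g x, u⟫ with hh
  set h' : E → (E →L[ℝ] ℝ) := fun u => T (g u) - T (g x) with hh'
  have hder : ∀ u ∈ s, HasFDerivWithinAt h (h' u) s u := by
    intro u hu
    have h1 : HasFDerivAt f (T (g u)) u := (hdiff u (hsubΩ hu)).hasFDerivAt
    have h2 : HasFDerivAt (fun v => ⟪g x, v⟫) (T (g x)) u := by
      exact (T (g x)).hasFDerivAt (x := u)
    exact ((h1.sub h2).hasFDerivWithinAt)
  have hbound : ∀ u ∈ s, ‖h' u‖ ≤ L * ‖y - x‖ := by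
    intro u hu
    have heq : ‖h' u‖ = ‖g u - g x‖ := by
      rw [hh']
      simp only [← map_sub]
      exact (T.norm_map _)
    rw [heq]
    have hux : ‖u - x‖ ≤ ‖y - x‖ := by
      rw [hs, segment_eq_image'] at hu
      obtain ⟨θ, hθ, rfl⟩ := hu
      rw [add_sub_cancel_left, norm_smul, Real.norm_eq_abs, abs_of_nonneg hθ.1]
      nlinarith [norm_nonneg (y - x), hθ.2]
    calc ‖g u - g x‖ ≤ L * ‖u - x‖ := hLip u (hsubΩ hu) x hx
      _ ≤ L * ‖y - x‖ := by nlinarith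
  have hmvt := Convex.norm_image_sub_le_of_norm_hasFDerivWithin_le hder hbound
    (convex_segment x y) (left_mem_segment ℝ x y) (right_mem_segment ℝ x y)
  have h1 : h y - h x ≤ L * ‖y - x‖ * ‖y - x‖ :=
    le_trans (le_abs_self _) (by rwa [← Real.norm_eq_abs])
  have h2 : h y - h x = f y - f x - ⟪g x, y - x⟫ := by
    rw [hh]; simp [inner_sub_right]; ring
  nlinarith [sq_nonneg ‖y - x‖]

lemma fermat_aux {n : ℕ} {ι : Type*} [Fintype ι] [Nonempty ι]
    {Ω : Set (EuclideanSpace ℝ (Fin n))} (hΩo : IsOpen Ω) (hΩc : Convex ℝ Ω)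
    {f : ι → EuclideanSpace ℝ (Fin n) → ℝ}
    {g : ι → EuclideanSpace ℝ (Fin n) → EuclideanSpace ℝ (Fin n)} {L : ι → ℝ}
    (hL : ∀ i, 0 ≤ L i)
    (hdiff : ∀ i, ∀ x ∈ Ω, HasGradientAt (f i) (g i x) x)
    (hLip : ∀ i, ∀ x ∈ Ω, ∀ y ∈ Ω, ‖g i x - g i y‖ ≤ L i * ‖x - y‖)
    {F : EuclideanSpace ℝ (Fin n) → ℝ}
    (hF : ∀ x, F x = Finset.univ.sup' Finset.univ_nonempty fun i => f i x)
    {lam : ℝ} (hlam : 0 < lam)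
    {pk ps : EuclideanSpace ℝ (Fin n)} (hps : ps ∈ Ω)
    (hmin : ∀ x, F ps + lam / 2 * ‖ps - pk‖ ^ 2 ≤ F x + lam / 2 * ‖x - pk‖ ^ 2) :
    lam • (pk - ps) ∈ convexHull ℝ {w | ∃ i, f i ps = F ps ∧ g i ps = w} := by
  by_contra hz
  set S := {w | ∃ i, f i ps = F ps ∧ g i ps = w} with hS
  have hSfin : S.Finite :=
    Set.Finite.subset (Set.finite_range fun i => g i ps)
      (by rintro w ⟨i, _, rfl⟩; exact ⟨i, rfl⟩)
  obtain ⟨φ, u, hφ1, hφ2⟩ := geometric_hahn_banach_closed_point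
    (convex_convexHull ℝ S) (hSfin.isClosed_convexHull ℝ) hz
  set d := (InnerProductSpace.toDual ℝ (EuclideanSpace ℝ (Fin n))).symm φ with hd
  have hdip : ∀ w, ⟪d, w⟫ = φ w := fun w => InnerProductSpace.toDual_symm_apply
  set ε := φ (lam • (pk - ps)) - u with hε
  have hεpos : 0 < ε := sub_pos.2 hφ2
  set G := F ps + lam / 2 * ‖ps - pk‖ ^ 2 with hG
  have key : ∀ i : ι, ∀ᶠ t in 𝓝[>] (0:ℝ),
      (ps + t • d ∈ Ω) → f i (ps + t • d) + lam / 2 * ‖ps + t • d - pk‖ ^ 2 < G := by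
    intro i
    have hle : f i ps ≤ F ps := by
      rw [hF]; exact Finset.le_sup' (fun j => f j ps) (Finset.mem_univ i)
    rcases eq_or_lt_of_le hle with hact | hinact
    · -- active index
      have hw : φ (g i ps) < u := hφ1 _ (subset_convexHull ℝ S ⟨i, hact, rfl⟩)
      have hslope : ⟪g i ps, d⟫ + lam * ⟪ps - pk, d⟫ < -ε := by
        have h1 : ⟪g i ps, d⟫ = φ (g i ps) := by rw [real_inner_comm]; exact hdip _
        have h2 : lam * ⟪d, pk - ps⟫ = φ (lam • (pk - ps)) := by
          rw [← hdip, real_inner_smul_right]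
        have h3 : ⟪ps - pk, d⟫ = -⟪d, pk - ps⟫ := by
          rw [real_inner_comm]
          simp [inner_sub_right]
        rw [h1, h3]
        have := hw
        rw [hε] at *
        linarith [h2]
      set C := (L i + lam / 2) * ‖d‖ ^ 2 with hC
      have hev1 : ∀ᶠ t in 𝓝[>] (0:ℝ), t * C < ε := by
        have htend : Tendsto (fun t : ℝ => t * C) (𝓝[>] (0:ℝ)) (𝓝 0) := by
          have : Tendsto (fun t : ℝ => t * C) (𝓝 (0:ℝ)) (𝓝 (0 * C)) :=
            (tendsto_id.mul_const C)
          simpa using this.mono_left nhdsWithin_le_nhds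
        exact htend.eventually_lt_const hεpos
      filter_upwards [hev1, self_mem_nhdsWithin] with t htC ht0 hmem
      have ht0' : (0:ℝ) < t := ht0
      have hdesc := descent_aux hΩc (hL i) (hdiff i) (hLip i) hps hmem
      have he1 : ps + t • d - ps = t • d := by abel
      rw [he1] at hdesc
      have he2 : ps + t • d - pk = (ps - pk) + t • d := by abel
      have he3 : ‖ps + t • d - pk‖ ^ 2
          = ‖ps - pk‖ ^ 2 + 2 * (t * ⟪ps - pk, d⟫) + t ^ 2 * ‖d‖ ^ 2 := by
        rw [he2, norm_add_sq_real, real_inner_smul_right, norm_smul,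
          Real.norm_eq_abs, abs_of_pos ht0', mul_pow]
      have he4 : ⟪g i ps, t • d⟫ = t * ⟪g i ps, d⟫ := real_inner_smul_right _ _ _
      have he5 : ‖t • d‖ ^ 2 = t ^ 2 * ‖d‖ ^ 2 := by
        rw [norm_smul, Real.norm_eq_abs, abs_of_pos ht0', mul_pow]
      rw [he4, he5] at hdesc
      have hC2 : t ^ 2 * C = t * (t * C) := by rw [hC]; ring
      rw [hG, ← hact]
      nlinarith [mul_lt_mul_of_pos_left hslope ht0', mul_lt_mul_of_pos_left htC ht0']
    · -- inactive index
      have hcont : ContinuousAt (fun t : ℝ =>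
          f i (ps + t • d) + lam / 2 * ‖ps + t • d - pk‖ ^ 2) 0 := by
        have hline : Continuous (fun t : ℝ => ps + t • d) :=
          continuous_const.add (continuous_id.smul continuous_const)
        have hf : ContinuousAt (f i) ps := (hdiff i ps hps).differentiableAt.continuousAt
        have h1 : ContinuousAt (fun t : ℝ => f i (ps + t • d)) 0 := by
          have hf' : ContinuousAt (f i) (ps + (0:ℝ) • d) := by simpa using hf
          exact ContinuousAt.comp (g := f i) (f := fun t : ℝ => ps + t • d) (x := (0:ℝ)) hf' hline.continuousAt
        exact h1.add ((continuous_const.mul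
          ((hline.sub continuous_const).norm.pow 2)).continuousAt)
      have hval : f i (ps + (0:ℝ) • d) + lam / 2 * ‖ps + (0:ℝ) • d - pk‖ ^ 2 < G := by
        simp only [zero_smul, add_zero]
        rw [hG]; linarith
      have := (hcont.tendsto.eventually_lt_const (by simpa using hval))
      exact (this.filter_mono nhdsWithin_le_nhds).mono fun t ht _ => ht
  have hmemΩ : ∀ᶠ t in 𝓝[>] (0:ℝ), ps + t • d ∈ Ω := by
    have hline : ContinuousAt (fun t : ℝ => ps + t • d) 0 :=
      (continuous_const.add (continuous_id.smul continuous_const)).continuousAt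
    have := hline.eventually_mem (by simpa using hΩo.mem_nhds hps)
    exact this.filter_mono nhdsWithin_le_nhds
  obtain ⟨t, hti, htΩ⟩ := ((eventually_all.2 key).and hmemΩ).exists
  obtain ⟨j, _, hj⟩ := Finset.exists_mem_eq_sup' (Finset.univ_nonempty (α := ι))
    (fun i => f i (ps + t • d))
  have hcontr := hmin (ps + t • d)
  rw [hF (ps + t • d), hj] at hcontr
  exact absurd hcontr (not_le.2 (hti j htΩ))

/-- Euclidean instance of Lemma 5.4: under assumption h3 (a uniform lower bound on the
norm of elements of the subdifferential outside the sublevel set of `c`), the proximal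
iterates enter `{F ≤ c}` after finitely many steps. -/
theorem stmt_8 {n : ℕ} {ι : Type*} [Fintype ι] [Nonempty ι]
    (Ω : Set (EuclideanSpace ℝ (Fin n))) (hΩo : IsOpen Ω) (hΩc : Convex ℝ Ω)
    (f : ι → EuclideanSpace ℝ (Fin n) → ℝ)
    (g : ι → EuclideanSpace ℝ (Fin n) → EuclideanSpace ℝ (Fin n)) (L : ι → ℝ)
    (hdiff : ∀ i, ∀ x ∈ Ω, HasGradientAt (f i) (g i x) x)
    (hgcont : ∀ i, ContinuousOn (g i) Ω)
    (hLip : ∀ i, ∀ x ∈ Ω, ∀ y ∈ Ω, ‖g i x - g i y‖ ≤ L i * ‖x - y‖)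
    (F : EuclideanSpace ℝ (Fin n) → ℝ)
    (hF : ∀ x, F x = Finset.univ.sup' Finset.univ_nonempty fun i => f i x)
    (hbdd : BddBelow (Set.range F))
    (q : EuclideanSpace ℝ (Fin n)) (hq1 : ∃ x, F x < F q)
    (hq2 : {x | F x ≤ F q} ⊆ Ω)
    (c : ℝ) (hc1 : ∃ x, F x < c) (hc2 : c < F q)
    (δ : ℝ) (hδ : 0 < δ)
    (hsub : ∀ x, F x ≤ F q → ¬ F x ≤ c →
      ∀ y ∈ convexHull ℝ {w | ∃ i, f i x = F x ∧ g i x = w}, δ < ‖y‖)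
    (lamUp : ℝ) (lam : ℕ → ℝ)
    (hlam : ∀ k, Finset.univ.sup' Finset.univ_nonempty L < lam k ∧ lam k ≤ lamUp)
    (p : ℕ → EuclideanSpace ℝ (Fin n)) (hp0 : F (p 0) ≤ F q)
    (hprox : ∀ k, ∀ x, F (p (k + 1)) + lam k / 2 * ‖p (k + 1) - p k‖ ^ 2 ≤
      F x + lam k / 2 * ‖x - p k‖ ^ 2) :
    ∃ k₀ : ℕ, ∀ k ≥ k₀, F (p k) ≤ c := by
  -- nonnegativity of the Lipschitz constants
  obtain ⟨x0, hx0⟩ := hq1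
  have hx0Ω : x0 ∈ Ω := hq2 (le_of_lt hx0 : F x0 ≤ F q)
  have hqΩ : q ∈ Ω := hq2 (by simp : q ∈ {x | F x ≤ F q})
  have hx0q : x0 ≠ q := fun h => absurd hx0 (by rw [h]; exact lt_irrefl _)
  have hnpos : 0 < ‖x0 - q‖ := by
    rw [norm_pos_iff]; exact sub_ne_zero.2 hx0q
  have hLnn : ∀ i, 0 ≤ L i := by
    intro i
    nlinarith [hLip i x0 hx0Ω q hqΩ, norm_nonneg (g i x0 - g i q)]
  have hMnn : (0:ℝ) ≤ Finset.univ.sup' Finset.univ_nonempty L :=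
    le_trans (hLnn (Classical.arbitrary ι))
      (Finset.le_sup' L (Finset.mem_univ (Classical.arbitrary ι)))
  have hlampos : ∀ k, 0 < lam k := fun k => lt_of_le_of_lt hMnn (hlam k).1
  have hlamUp : 0 < lamUp := lt_of_lt_of_le (hlampos 0) (hlam 0).2
  -- monotonicity of F (p k)
  have hdec : ∀ k, F (p (k + 1)) ≤ F (p k) := by
    intro k
    have h := hprox k (p k)
    simp only [sub_self, norm_zero] at h
    nlinarith [sq_nonneg ‖p (k + 1) - p k‖, hlampos k]
  have hanti : ∀ j k : ℕ, j ≤ k → F (p k) ≤ F (p j) :=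
    fun j k hjk => antitone_nat_of_succ_le (f := fun m => F (p m)) hdec hjk
  have hFq : ∀ k, F (p k) ≤ F q := fun k => le_trans (hanti 0 k (Nat.zero_le k)) hp0
  -- uniform decrease while above level c
  set η := δ ^ 2 / (2 * lamUp) with hη
  have hηpos : 0 < η := by positivity
  have hstep : ∀ k, ¬ F (p (k + 1)) ≤ c → F (p (k + 1)) + η ≤ F (p k) := by
    intro k hnot
    have hpsΩ : p (k + 1) ∈ Ω := hq2 (hFq (k + 1))
    have hmem := fermat_aux hΩo hΩc hLnn hdiff hLip hF (hlampos k) hpsΩ (hprox k)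
    have hbig := hsub (p (k + 1)) (hFq (k + 1)) hnot _ hmem
    rw [norm_smul, Real.norm_eq_abs, abs_of_pos (hlampos k), norm_sub_rev] at hbig
    have h := hprox k (p k)
    simp only [sub_self, norm_zero] at h
    have hkup := (hlam k).2
    rw [hη]
    have hδlt : δ / lam k < ‖p (k + 1) - p k‖ := by
      rw [div_lt_iff₀ (hlampos k)]; linarith [hbig]
    have h1 : δ ^ 2 / (2 * lam k) ≤ lam k / 2 * ‖p (k + 1) - p k‖ ^ 2 := by
      rw [div_le_iff₀ (by linarith [hlampos k] : (0:ℝ) < 2 * lam k)]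
      have := mul_le_mul (le_of_lt hδlt) (le_of_lt hδlt)
        (le_of_lt (div_pos hδ (hlampos k))) (norm_nonneg _)
      have h2 : (δ / lam k) * (δ / lam k) = δ ^ 2 / lam k ^ 2 := by ring
      nlinarith [sq_nonneg (lam k), hlampos k]
    have h3 : δ ^ 2 / (2 * lamUp) ≤ δ ^ 2 / (2 * lam k) := by
      apply div_le_div_of_nonneg_left (by positivity) (by linarith [hlampos k] : (0:ℝ) < 2 * lam k)
      linarith
    nlinarith [sq_nonneg ‖p (k + 1) - p k‖]
  -- conclusion
  by_contra hcon
  push_neg at hcon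
  have hall : ∀ k, ¬ F (p k) ≤ c := by
    intro k hk
    obtain ⟨m, hm1, hm2⟩ := hcon k
    exact absurd (le_trans (hanti k m hm1) hk) (not_le.2 hm2)
  have hsum : ∀ k : ℕ, F (p k) + k * η ≤ F (p 0) := by
    intro k
    induction k with
    | zero => simp
    | succ k ih =>
      have := hstep k (hall (k + 1))
      push_cast
      push_cast at ih
      linarith
  obtain ⟨b, hb⟩ := hbdd
  have hbF : ∀ x, b ≤ F x := fun x => hb (Set.mem_range_self x)
  obtain ⟨k, hk⟩ := exists_nat_gt ((F (p 0) - b) / η)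
  have : F (p 0) - b < k * η := by
    rw [div_lt_iff₀ hηpos] at hk; linarith
  linarith [hsum k, hbF (p k)]
end

section
/- Let Ω ⊆ ℝⁿ be a bounded open convex set and f : ℝⁿ → ℝ a function convex on Ω. Let q be such that inf_{p ∈ ℝⁿ} f(p) < f(q) and {p : f(p) ≤ f(q)} ⊆ Ω, assume the minimizer set U* = {p : f(p) = inf_{x ∈ ℝⁿ} f(x)} is nonempty, and fix c ∈ (inf f, f(q)). Then there exists δ > 0 such that for every p ∈ {p : f(p) ≤ f(q)} \ {p : f(p) ≤ c} and every subgradient s of f at p, one has ‖s‖ > δ; in fact, for any fixed p* ∈ U*, δ = (c − f(p*))/ε works, where ε = sup{ ‖p* − p‖ : p* ∈ U*, p ∈ {f ≤ f(q)} \ {f ≤ c} }. -/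
open scoped RealInnerProductSpace

/-- Euclidean instance of Remark 5.2: convexity on a bounded set implies assumption h3,
with the explicit constant `δ = (c - f(p*))/ε`. -/
theorem stmt_9 {n : ℕ} (Ω : Set (EuclideanSpace ℝ (Fin n))) (hΩo : IsOpen Ω)
    (hΩc : Convex ℝ Ω) (hΩb : Bornology.IsBounded Ω)
    (f : EuclideanSpace ℝ (Fin n) → ℝ) (hconv : ConvexOn ℝ Ω f)
    (q : EuclideanSpace ℝ (Fin n)) (hq1 : ∃ x, f x < f q)
    (hq2 : {p | f p ≤ f q} ⊆ Ω)
    (hU : {p : EuclideanSpace ℝ (Fin n) | ∀ x, f p ≤ f x}.Nonempty)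
    (c : ℝ) (hc1 : ∀ p ∈ {p : EuclideanSpace ℝ (Fin n) | ∀ x, f p ≤ f x}, f p < c)
    (hc2 : c < f q) :
    (∃ δ > 0, ∀ p, f p ≤ f q → ¬ f p ≤ c →
      ∀ s, (∀ y ∈ Ω, f p + ⟪s, y - p⟫ ≤ f y) → δ < ‖s‖) ∧
    ∀ pstar ∈ {p : EuclideanSpace ℝ (Fin n) | ∀ x, f p ≤ f x},
      ∀ p, f p ≤ f q → ¬ f p ≤ c →
        ∀ s, (∀ y ∈ Ω, f p + ⟪s, y - p⟫ ≤ f y) →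
          (c - f pstar) /
              sSup {r | ∃ p' ∈ {p : EuclideanSpace ℝ (Fin n) | ∀ x, f p ≤ f x},
                ∃ z, f z ≤ f q ∧ ¬ f z ≤ c ∧ r = ‖p' - z‖} < ‖s‖ := by
  obtain ⟨C, hC⟩ := Metric.isBounded_iff.mp hΩb
  set S : Set ℝ := {r | ∃ p' ∈ {p : EuclideanSpace ℝ (Fin n) | ∀ x, f p ≤ f x},
      ∃ z, f z ≤ f q ∧ ¬ f z ≤ c ∧ r = ‖p' - z‖} with hS
  have hbdd : BddAbove S := by
    refine ⟨C, fun r hr => ?_⟩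
    obtain ⟨p', hp', z, hz1, hz2, rfl⟩ := hr
    have h1 : p' ∈ Ω := hq2 (by exact (hp' q : f p' ≤ f q))
    have h2 : z ∈ Ω := hq2 hz1
    simpa [dist_eq_norm] using hC h1 h2
  have key : ∀ pstar ∈ {p : EuclideanSpace ℝ (Fin n) | ∀ x, f p ≤ f x},
      ∀ p, f p ≤ f q → ¬ f p ≤ c →
        ∀ s, (∀ y ∈ Ω, f p + ⟪s, y - p⟫ ≤ f y) →
          (c - f pstar) / sSup S < ‖s‖ := by
    intro pstar hpstar p hp1 hp2 s hs
    have hpΩ : pstar ∈ Ω := hq2 (hpstar q)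
    have hfp : c < f p := lt_of_not_ge hp2
    have hfps : f pstar < c := hc1 pstar hpstar
    have hmem : ‖pstar - p‖ ∈ S := ⟨pstar, hpstar, p, hp1, hp2, rfl⟩
    have hne : pstar ≠ p := by
      intro h; rw [h] at hfps; exact absurd (hfps.trans hfp) (lt_irrefl _)
    have hnorm : 0 < ‖pstar - p‖ := by
      rw [norm_pos_iff]; exact sub_ne_zero.mpr hne
    have hle : ‖pstar - p‖ ≤ sSup S := le_csSup hbdd hmem
    have hsub := hs pstar hpΩ
    -- f p + ⟪s, pstar - p⟫ ≤ f pstar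
    have hinner : c - f pstar < ⟪s, p - pstar⟫ := by
      have : ⟪s, pstar - p⟫ ≤ f pstar - f p := by linarith
      have h2 : ⟪s, p - pstar⟫ = - ⟪s, pstar - p⟫ := by
        rw [← inner_neg_right, neg_sub]
      rw [h2]; linarith
    have hcs : ⟪s, p - pstar⟫ ≤ ‖s‖ * ‖p - pstar‖ := real_inner_le_norm s _
    have hnorm' : ‖p - pstar‖ = ‖pstar - p‖ := norm_sub_rev _ _
    have hlt : c - f pstar < ‖s‖ * ‖pstar - p‖ := by
      rw [← hnorm']; linarith
    have h1 : (c - f pstar) / sSup S ≤ (c - f pstar) / ‖pstar - p‖ :=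
      div_le_div_of_nonneg_left (by linarith) hnorm hle
    have h2 : (c - f pstar) / ‖pstar - p‖ < ‖s‖ := by
      rw [div_lt_iff₀ hnorm]; linarith [hlt]
    linarith
  refine ⟨?_, key⟩
  obtain ⟨pstar, hpstar⟩ := hU
  by_cases h : ∃ p, f p ≤ f q ∧ ¬ f p ≤ c
  · obtain ⟨p0, hp01, hp02⟩ := h
    have hmem : ‖pstar - p0‖ ∈ S := ⟨pstar, hpstar, p0, hp01, hp02, rfl⟩
    have hne : pstar ≠ p0 := by
      intro h; have := hc1 pstar hpstar
      rw [h] at this; exact hp02 this.le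
    have hnorm : 0 < ‖pstar - p0‖ := by
      rw [norm_pos_iff]; exact sub_ne_zero.mpr hne
    have hSpos : 0 < sSup S := lt_of_lt_of_le hnorm (le_csSup hbdd hmem)
    refine ⟨(c - f pstar) / sSup S, div_pos (by linarith [hc1 pstar hpstar]) hSpos,
      fun p h1 h2 s hs => key pstar hpstar p h1 h2 s hs⟩
  · push_neg at h
    exact ⟨1, one_pos, fun p h1 h2 => absurd (h p h1) h2⟩
end

section
/- Let n ≥ 1. For every n×n real symmetric positive definite matrix X one has F(X) ≥ 0, and F(X) = 0 if and only if X = I. Consequently inf{ F(X) : X symmetric positive definite } = 0 and the infimum is attained exactly at X = I. -/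
/-- The objective function of Example 6.2 of the paper:
`F(X) = max{ ln det X, −4 ln det X + e^(−2 tr X) − e^(−2n), tr X⁻¹ − n }`. -/
noncomputable def Fmat (n : ℕ) (X : Matrix (Fin n) (Fin n) ℝ) : ℝ :=
  max (Real.log X.det)
    (max (-4 * Real.log X.det + Real.exp (-2 * X.trace) - Real.exp (-2 * n))
      (X⁻¹.trace - n))

section Aux

open Matrix

lemma aux_posDef_one {n : ℕ} : (1 : Matrix (Fin n) (Fin n) ℝ).PosDef := by
  exact Matrix.PosDef.one

lemma aux_trace_eq {n : ℕ} {X : Matrix (Fin n) (Fin n) ℝ} (hX : X.IsHermitian) :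
    X.trace = ∑ i, hX.eigenvalues i := by
  conv_lhs => rw [hX.spectral_theorem, Unitary.conjStarAlgAut_apply]
  rw [Matrix.trace_mul_cycle, (Matrix.mem_unitaryGroup_iff').mp hX.eigenvectorUnitary.2,
    Matrix.one_mul, Matrix.trace_diagonal]
  simp

lemma aux_det_eq {n : ℕ} {X : Matrix (Fin n) (Fin n) ℝ} (hX : X.IsHermitian) :
    X.det = ∏ i, hX.eigenvalues i := by
  simpa using hX.det_eq_prod_eigenvalues

lemma aux_inv_eq {n : ℕ} {X : Matrix (Fin n) (Fin n) ℝ} (hX : X.PosDef) :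
    X⁻¹ = (hX.1.eigenvectorUnitary : Matrix (Fin n) (Fin n) ℝ) *
        Matrix.diagonal (fun i => (hX.1.eigenvalues i)⁻¹) *
        star (hX.1.eigenvectorUnitary : Matrix (Fin n) (Fin n) ℝ) := by
  set U : Matrix (Fin n) (Fin n) ℝ := (hX.1.eigenvectorUnitary : Matrix (Fin n) (Fin n) ℝ)
  set D : Matrix (Fin n) (Fin n) ℝ := Matrix.diagonal (RCLike.ofReal ∘ hX.1.eigenvalues)
  set Di : Matrix (Fin n) (Fin n) ℝ := Matrix.diagonal (fun i => (hX.1.eigenvalues i)⁻¹)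
  have hU : U * star U = 1 := (Matrix.mem_unitaryGroup_iff).mp hX.1.eigenvectorUnitary.2
  have hU' : star U * U = 1 := (Matrix.mem_unitaryGroup_iff').mp hX.1.eigenvectorUnitary.2
  have hD : D * Di = 1 := by
    have hfun : (fun i => (RCLike.ofReal ∘ hX.1.eigenvalues) i * (hX.1.eigenvalues i)⁻¹) =
        (1 : Fin n → ℝ) := by
      funext i
      simp [mul_inv_cancel₀ (ne_of_gt (hX.eigenvalues_pos i))]
    rw [Matrix.diagonal_mul_diagonal, hfun]; exact Matrix.diagonal_one
  apply Matrix.inv_eq_right_inv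
  conv_lhs => rw [hX.1.spectral_theorem, Unitary.conjStarAlgAut_apply]
  have h1 : (U * D * star U) * (U * Di * star U) = U * D * (star U * U) * Di * star U := by
    simp only [Matrix.mul_assoc]
  rw [h1, hU', Matrix.mul_one, Matrix.mul_assoc U D Di, hD, Matrix.mul_one, hU]

lemma aux_inv_trace_eq {n : ℕ} {X : Matrix (Fin n) (Fin n) ℝ} (hX : X.PosDef) :
    X⁻¹.trace = ∑ i, (hX.1.eigenvalues i)⁻¹ := by
  rw [aux_inv_eq hX, Matrix.trace_mul_cycle,
    (Matrix.mem_unitaryGroup_iff').mp hX.1.eigenvectorUnitary.2, Matrix.one_mul,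
    Matrix.trace_diagonal]

lemma aux_eq_one {n : ℕ} {X : Matrix (Fin n) (Fin n) ℝ} (hX : X.PosDef)
    (h : ∀ i, hX.1.eigenvalues i = 1) : X = 1 := by
  have hD : Matrix.diagonal (RCLike.ofReal ∘ hX.1.eigenvalues) =
      (1 : Matrix (Fin n) (Fin n) ℝ) := by
    have hfun : (RCLike.ofReal ∘ hX.1.eigenvalues : Fin n → ℝ) = (1 : Fin n → ℝ) := by
      funext i
      simp [h i]
    rw [hfun]; exact Matrix.diagonal_one
  conv_lhs => rw [hX.1.spectral_theorem, Unitary.conjStarAlgAut_apply]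
  rw [hD, Matrix.mul_one, (Matrix.mem_unitaryGroup_iff).mp hX.1.eigenvectorUnitary.2]

lemma aux_Fmat_one {n : ℕ} : Fmat n 1 = 0 := by
  simp [Fmat, Matrix.trace_one, inv_one]

end Aux

/-- Claim 6.1 of the paper: `F ≥ 0` on the symmetric positive definite cone, `F(X) = 0`
iff `X = I`; consequently `inf F = 0`, attained exactly at the identity. -/
theorem stmt_12 {n : ℕ} (hn : 1 ≤ n) :
    (∀ X : Matrix (Fin n) (Fin n) ℝ, X.PosDef → 0 ≤ Fmat n X) ∧
    (∀ X : Matrix (Fin n) (Fin n) ℝ, X.PosDef → (Fmat n X = 0 ↔ X = 1)) ∧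
    IsGLB {y | ∃ X : Matrix (Fin n) (Fin n) ℝ, X.PosDef ∧ y = Fmat n X} 0 := by
  -- key estimate: for PosDef X, -(log det X) ≤ tr X⁻¹ - n
  have key : ∀ X : Matrix (Fin n) (Fin n) ℝ, (hX : X.PosDef) →
      -Real.log X.det ≤ X⁻¹.trace - n := by
    intro X hX
    have hpos : ∀ i, 0 < hX.1.eigenvalues i := hX.eigenvalues_pos
    have hlog : Real.log X.det = ∑ i, Real.log (hX.1.eigenvalues i) := by
      rw [aux_det_eq hX.1, Real.log_prod]
      exact fun i _ => ne_of_gt (hpos i)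
    have hn' : (n : ℝ) = ∑ _i : Fin n, (1 : ℝ) := by simp
    rw [aux_inv_trace_eq hX, hlog, hn', ← Finset.sum_neg_distrib, ← Finset.sum_sub_distrib]
    apply Finset.sum_le_sum
    intro i _
    have h := Real.log_le_sub_one_of_pos (inv_pos.mpr (hpos i))
    rw [Real.log_inv] at h
    linarith
  have part1 : ∀ X : Matrix (Fin n) (Fin n) ℝ, X.PosDef → 0 ≤ Fmat n X := by
    intro X hX
    rcases le_or_gt 0 (Real.log X.det) with h | h
    · exact h.trans (le_max_left _ _)
    · have := key X hX
      have h2 : 0 ≤ X⁻¹.trace - n := by linarith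
      exact h2.trans ((le_max_right _ _).trans (le_max_right _ _))
  refine ⟨part1, ?_, ?_⟩
  · intro X hX
    constructor
    · intro h
      have hpos : ∀ i, 0 < hX.1.eigenvalues i := hX.eigenvalues_pos
      have h1 : Real.log X.det ≤ 0 := h ▸ le_max_left _ _
      have h3 : X⁻¹.trace - n ≤ 0 := h ▸ (le_max_right _ _).trans (le_max_right _ _)
      have hk := key X hX
      have hL : Real.log X.det = 0 := le_antisymm h1 (by linarith)
      have hT : X⁻¹.trace - n = 0 := le_antisymm h3 (by linarith)
      -- so the sum ∑ (λᵢ⁻¹ - 1 + log λᵢ) = 0 with nonnegative terms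
      have hlog : Real.log X.det = ∑ i, Real.log (hX.1.eigenvalues i) := by
        rw [aux_det_eq hX.1, Real.log_prod]
        exact fun i _ => ne_of_gt (hpos i)
      have hsum : ∑ i, ((hX.1.eigenvalues i)⁻¹ - 1 + Real.log (hX.1.eigenvalues i)) = 0 := by
        have hn' : (n : ℝ) = ∑ _i : Fin n, (1 : ℝ) := by simp
        have : X⁻¹.trace - n + Real.log X.det = 0 := by rw [hL, hT]; ring
        rw [aux_inv_trace_eq hX, hlog, hn', ← Finset.sum_sub_distrib,
          ← Finset.sum_add_distrib] at this
        exact this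
      have hterm : ∀ i ∈ Finset.univ, (0:ℝ) ≤
          (hX.1.eigenvalues i)⁻¹ - 1 + Real.log (hX.1.eigenvalues i) := by
        intro i _
        have h := Real.log_le_sub_one_of_pos (inv_pos.mpr (hpos i))
        rw [Real.log_inv] at h
        linarith
      have hzero := (Finset.sum_eq_zero_iff_of_nonneg hterm).mp hsum
      apply aux_eq_one hX
      intro i
      by_contra hne
      have hlt := Real.log_lt_sub_one_of_pos (inv_pos.mpr (hpos i))
        (by simpa [inv_eq_one] using hne)
      rw [Real.log_inv] at hlt
      have := hzero i (Finset.mem_univ i)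
      linarith
    · rintro rfl
      exact aux_Fmat_one
  · constructor
    · rintro y ⟨X, hX, rfl⟩
      exact part1 X hX
    · intro b hb
      exact hb ⟨1, aux_posDef_one, aux_Fmat_one.symm⟩
end

section
/- Let n ≥ 1 and let X be an n×n real symmetric positive definite matrix. Then: (i) if det X = 1, then −4·ln det X + exp(−2·tr X) − exp(−2n) ≤ 0 ≤ tr(X⁻¹) − n, and hence F(X) = tr(X⁻¹) − n ≥ 0; (ii) if det X > 1, then −4·ln det X + exp(−2·tr X) − exp(−2n) < 0 < ln det X, and F(X) = max{ ln det X, tr(X⁻¹) − n } > 0; (iii) if det X < 1, then ln det X < 0 < tr(X⁻¹) − n, and F(X) = max{ −4·ln det X + exp(−2·tr X) − exp(−2n), tr(X⁻¹) − n } > 0. -/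
open Matrix Finset in
lemma trace_eq_sum_eig {n : ℕ} {A : Matrix (Fin n) (Fin n) ℝ} (hA : A.IsHermitian) :
    A.trace = ∑ i, hA.eigenvalues i := by
  simpa using hA.trace_eq_sum_eigenvalues

lemma key {n : ℕ} {A : Matrix (Fin n) (Fin n) ℝ} (hA : A.PosDef) :
    (n : ℝ) + Real.log A.det ≤ A.trace := by
  have hpos := hA.eigenvalues_pos
  have hdet : A.det = ∏ i, hA.isHermitian.eigenvalues i := by
    rw [hA.isHermitian.det_eq_prod_eigenvalues]; norm_num
  rw [hdet, Real.log_prod (fun i _ => (hpos i).ne'),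
    trace_eq_sum_eig hA.isHermitian]
  have : (n : ℝ) = ∑ _i : Fin n, (1 : ℝ) := by simp
  rw [this, ← Finset.sum_add_distrib]
  apply Finset.sum_le_sum
  intro i _
  have := Real.log_le_sub_one_of_pos (hpos i)
  linarith

/-- The piecewise description (eknp:1) of `F` according to the sign of `det X − 1`,
established in the proof of Claim 6.1 of the paper. -/
theorem stmt_13 {n : ℕ} (hn : 1 ≤ n) (X : Matrix (Fin n) (Fin n) ℝ) (hX : X.PosDef) :
    (X.det = 1 →
      (-4 * Real.log X.det + Real.exp (-2 * X.trace) - Real.exp (-2 * n) ≤ 0 ∧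
        0 ≤ X⁻¹.trace - n ∧ Fmat n X = X⁻¹.trace - n ∧ 0 ≤ Fmat n X)) ∧
    (1 < X.det →
      (-4 * Real.log X.det + Real.exp (-2 * X.trace) - Real.exp (-2 * n) < 0 ∧
        0 < Real.log X.det ∧
        Fmat n X = max (Real.log X.det) (X⁻¹.trace - n) ∧ 0 < Fmat n X)) ∧
    (X.det < 1 →
      (Real.log X.det < 0 ∧ 0 < X⁻¹.trace - n ∧
        Fmat n X =
          max (-4 * Real.log X.det + Real.exp (-2 * X.trace) - Real.exp (-2 * n))
            (X⁻¹.trace - n) ∧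
        0 < Fmat n X)) := by
  have hdet : 0 < X.det := hX.det_pos
  have hkey : (n : ℝ) + Real.log X.det ≤ X.trace := key hX
  have hkeyinv : (n : ℝ) - Real.log X.det ≤ X⁻¹.trace := by
    have := key hX.inv
    rwa [Matrix.det_nonsing_inv, Ring.inverse_eq_inv, Real.log_inv, ← sub_eq_add_neg] at this
  set L := Real.log X.det with hL
  set t := X⁻¹.trace - (n : ℝ) with ht
  set m := -4 * L + Real.exp (-2 * X.trace) - Real.exp (-2 * (n : ℝ)) with hm
  have hF : Fmat n X = max L (max m t) := rfl
  refine ⟨?_, ?_, ?_⟩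
  · intro h1
    have hL0 : L = 0 := by rw [hL, h1, Real.log_one]
    have hT : (n : ℝ) ≤ X.trace := by rw [hL0] at hkey; linarith
    have hmid : m ≤ 0 := by
      have : Real.exp (-2 * X.trace) ≤ Real.exp (-2 * n) := by
        apply Real.exp_le_exp.mpr; nlinarith
      rw [hm, hL0]; linarith
    have htn : 0 ≤ t := by rw [hL0] at hkeyinv; rw [ht]; linarith
    have hFeq : Fmat n X = t := by
      rw [hF, hL0, max_eq_right (hmid.trans htn), max_eq_right htn]
    exact ⟨hmid, htn, hFeq, hFeq ▸ htn⟩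
  · intro h1
    have hL0 : 0 < L := Real.log_pos h1
    have hT : (n : ℝ) < X.trace := by linarith
    have hmid : m < 0 := by
      have : Real.exp (-2 * X.trace) < Real.exp (-2 * n) := by
        apply Real.exp_lt_exp.mpr; nlinarith
      rw [hm]; nlinarith
    have hFeq : Fmat n X = max L t := by
      rw [hF, ← max_assoc, max_eq_left (hmid.le.trans hL0.le)]
    have hpos : 0 < Fmat n X := by rw [hFeq]; exact lt_max_of_lt_left hL0
    exact ⟨hmid, hL0, hFeq, hpos⟩
  · intro h1
    have hL0 : L < 0 := Real.log_neg hdet h1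
    have htn : 0 < t := by rw [ht]; linarith
    have hFeq : Fmat n X = max m t := by
      rw [hF, max_eq_right]
      exact le_trans (by linarith : L ≤ t) (le_max_right _ _)
    have hpos : 0 < Fmat n X := by rw [hFeq]; exact lt_max_of_lt_right htn
    exact ⟨hL0, htn, hFeq, hpos⟩
end

section
/- Let n ≥ 1 and let X be an n×n real symmetric positive definite matrix with (1/4)·I ≺ X ≺ I (equivalently, every eigenvalue of X lies in the open interval (1/4, 1)). Then −4·ln det X + exp(−2·tr X) − exp(−2n) > tr(X⁻¹) − n. -/
open Matrix Finset

private lemma scalar_ineq {x : ℝ} (hx1 : 1/4 < x) (hx2 : x < 1) :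
    x⁻¹ - 1 + 4 * Real.log x ≤ 0 := by
  have hx : 0 < x := by linarith
  have hlog := Real.log_le_sub_one_of_pos hx
  have hinv : x⁻¹ * x = 1 := inv_mul_cancel₀ hx.ne'
  nlinarith [hinv, hlog, mul_pos hx hx]

/-- Claim 6.3 of the paper: if `(1/4)·I ≺ X ≺ I` then
`−4 ln det X + e^(−2 tr X) − e^(−2n) > tr X⁻¹ − n`. -/
theorem stmt_15 {n : ℕ} (hn : 1 ≤ n) (X : Matrix (Fin n) (Fin n) ℝ) (hX : X.PosDef)
    (h1 : (X - (1 / 4 : ℝ) • 1).PosDef)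
    (h2 : ((1 : Matrix (Fin n) (Fin n) ℝ) - X).PosDef) :
    X⁻¹.trace - n <
      -4 * Real.log X.det + Real.exp (-2 * X.trace) - Real.exp (-2 * n) := by
  classical
  have hH : X.IsHermitian := hX.1
  set lam : Fin n → ℝ := hH.eigenvalues with hlamdef
  set U : Matrix (Fin n) (Fin n) ℝ := (hH.eigenvectorUnitary : Matrix (Fin n) (Fin n) ℝ) with hUdef
  have hUU : U * star U = 1 := (Matrix.mem_unitaryGroup_iff).mp hH.eigenvectorUnitary.2
  have hUU' : star U * U = 1 := (Matrix.mem_unitaryGroup_iff').mp hH.eigenvectorUnitary.2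
  have hlampos : ∀ i, 0 < lam i := fun i => hX.eigenvalues_pos i
  -- each eigenvalue is in (1/4, 1)
  have hbound : ∀ i, 1/4 < lam i ∧ lam i < 1 := by
    intro i
    set v : Fin n → ℝ := ⇑(hH.eigenvectorBasis i) with hvdef
    have hv0 : v ≠ 0 := by
      have := hH.eigenvectorBasis.orthonormal.ne_zero i
      intro h
      apply this
      ext j
      exact congrFun h j
    have hXv : X *ᵥ v = lam i • v := hH.mulVec_eigenvectorBasis i
    have hvv : dotProduct v v = 1 := by
      have he := hH.eigenvalues_eq i
      rw [hXv] at he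
      simp only [RCLike.re_to_real, dotProduct_smul, smul_eq_mul, star_trivial] at he
      have : lam i * 1 = lam i * (dotProduct v v) := by rw [mul_one]; exact he
      exact (mul_left_cancel₀ (hlampos i).ne' this.symm)
    constructor
    · have := h1.dotProduct_mulVec_pos hv0
      have hh : (X - (1/4 : ℝ) • 1) *ᵥ v = (lam i - 1/4) • v := by
        rw [sub_mulVec, hXv, smul_mulVec, one_mulVec, ← sub_smul]
      rw [hh] at this
      simp only [star_trivial, dotProduct_smul, smul_eq_mul, hvv, mul_one] at this
      linarith
    · have := h2.dotProduct_mulVec_pos hv0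
      have hh : ((1 : Matrix (Fin n) (Fin n) ℝ) - X) *ᵥ v = (1 - lam i) • v := by
        rw [sub_mulVec, hXv, one_mulVec, sub_smul, one_smul]
      rw [hh] at this
      simp only [star_trivial, dotProduct_smul, smul_eq_mul, hvv, mul_one] at this
      linarith
  -- spectral decomposition facts
  have hspec : X = U * Matrix.diagonal lam * star U := by
    have := hH.spectral_theorem
    simpa using this
  have htrX : X.trace = ∑ i, lam i := by
    conv_lhs => rw [hspec]
    rw [Matrix.trace_mul_comm, ← Matrix.mul_assoc, hUU', one_mul, Matrix.trace_diagonal]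
  have hinv : X⁻¹ = U * Matrix.diagonal (fun i => (lam i)⁻¹) * star U := by
    apply Matrix.inv_eq_right_inv
    have key : Matrix.diagonal lam * Matrix.diagonal (fun i => (lam i)⁻¹) = 1 := by
      rw [Matrix.diagonal_mul_diagonal]
      have : (fun i => lam i * (lam i)⁻¹) = fun _ => (1:ℝ) := by
        funext i; exact mul_inv_cancel₀ (hlampos i).ne'
      rw [this, Matrix.diagonal_one]
    rw [hspec]
    simp only [Matrix.mul_assoc]
    rw [← Matrix.mul_assoc (star U) U, hUU', one_mul,
      ← Matrix.mul_assoc (Matrix.diagonal lam) (Matrix.diagonal fun i => (lam i)⁻¹), key, one_mul,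
      hUU]
  have htrinv : X⁻¹.trace = ∑ i, (lam i)⁻¹ := by
    rw [hinv, Matrix.trace_mul_comm, ← Matrix.mul_assoc, hUU', one_mul, Matrix.trace_diagonal]
  have hdet : X.det = ∏ i, lam i := by
    have := hH.det_eq_prod_eigenvalues
    simpa using this
  have hlogdet : Real.log X.det = ∑ i, Real.log (lam i) := by
    rw [hdet]
    exact Real.log_prod (fun i _ => (hlampos i).ne')
  -- sum inequality
  have hsum : ∑ i, ((lam i)⁻¹ - 1 + 4 * Real.log (lam i)) ≤ 0 :=
    Finset.sum_nonpos (fun i _ => scalar_ineq (hbound i).1 (hbound i).2)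
  have hcard : (Finset.univ : Finset (Fin n)).card = n := by simp
  have hsum' : ∑ i, (lam i)⁻¹ - (n:ℝ) + 4 * ∑ i, Real.log (lam i) ≤ 0 := by
    have := hsum
    rw [Finset.sum_add_distrib, Finset.sum_sub_distrib, ← Finset.mul_sum] at this
    simpa [hcard] using this
  have htrlt : X.trace < (n:ℝ) := by
    rw [htrX]
    calc ∑ i, lam i < ∑ _i : Fin n, (1:ℝ) := by
          apply Finset.sum_lt_sum_of_nonempty
          · exact Finset.univ_nonempty_iff.mpr (Fin.pos_iff_nonempty.mp hn)
          · exact fun i _ => (hbound i).2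
      _ = n := by simp
  have hexp : Real.exp (-2 * (n:ℝ)) < Real.exp (-2 * X.trace) :=
    Real.exp_lt_exp.mpr (by linarith)
  rw [htrinv, hlogdet]
  linarith
end

section
/- The function g : ℝ → ℝ defined by g(x) = −x + exp(−2·exp(x)) − exp(−2) is convex on the interval [ln(1/2), +∞). -/
private lemma hd1 (x : ℝ) :
    HasDerivAt (fun x : ℝ => -x + Real.exp (-2 * Real.exp x) - Real.exp (-2))
      (-1 + -2 * Real.exp x * Real.exp (-2 * Real.exp x)) x := by
  have h1 : HasDerivAt (fun x : ℝ => -2 * Real.exp x) (-2 * Real.exp x) x :=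
    (Real.hasDerivAt_exp x).const_mul (-2)
  have h2 : HasDerivAt (fun x : ℝ => Real.exp (-2 * Real.exp x))
      (Real.exp (-2 * Real.exp x) * (-2 * Real.exp x)) x :=
    (Real.hasDerivAt_exp _).comp x h1
  have h3 : HasDerivAt (fun x : ℝ => -x) (-1) x := by
    exact (hasDerivAt_id' x).neg
  have := (h3.add h2).sub_const (Real.exp (-2))
  convert this using 1
  all_goals first | rfl | ring

private lemma hd2 (x : ℝ) :
    HasDerivAt (fun x : ℝ => -1 + -2 * Real.exp x * Real.exp (-2 * Real.exp x))
      (-2 * Real.exp x * Real.exp (-2 * Real.exp x)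
        + -2 * Real.exp x * (Real.exp (-2 * Real.exp x) * (-2 * Real.exp x))) x := by
  have h1 : HasDerivAt (fun x : ℝ => -2 * Real.exp x) (-2 * Real.exp x) x :=
    (Real.hasDerivAt_exp x).const_mul (-2)
  have h2 : HasDerivAt (fun x : ℝ => Real.exp (-2 * Real.exp x))
      (Real.exp (-2 * Real.exp x) * (-2 * Real.exp x)) x :=
    (Real.hasDerivAt_exp _).comp x h1
  exact (h1.mul h2).const_add (-1)

/-- Example 6.1 of the paper, transported to the Euclidean line via the isometry
`x ↦ eˣ`: the function `g(x) = −x + e^(−2 eˣ) − e^(−2)` is convex on `[ln(1/2), ∞)`. -/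
theorem stmt_18 :
    ConvexOn ℝ (Set.Ici (Real.log (1 / 2)))
      (fun x : ℝ => -x + Real.exp (-2 * Real.exp x) - Real.exp (-2)) := by
  have hderiv : deriv (fun x : ℝ => -x + Real.exp (-2 * Real.exp x) - Real.exp (-2))
      = fun x : ℝ => -1 + -2 * Real.exp x * Real.exp (-2 * Real.exp x) :=
    funext fun x => (hd1 x).deriv
  apply convexOn_of_deriv2_nonneg (convex_Ici _)
  · exact Continuous.continuousOn (by continuity)
  · exact fun x _ => (hd1 x).differentiableAt.differentiableWithinAt
  · rw [hderiv]
    exact fun x _ => (hd2 x).differentiableAt.differentiableWithinAt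
  · intro x hx
    rw [Function.iterate_succ, Function.iterate_one, Function.comp_apply, hderiv, (hd2 x).deriv]
    have hx' : Real.log (1 / 2) < x := by
      simpa [interior_Ici] using hx
    have h12 : (1 : ℝ) / 2 < Real.exp x := by
      calc (1 : ℝ) / 2 = Real.exp (Real.log (1 / 2)) := (Real.exp_log (by norm_num)).symm
        _ < Real.exp x := Real.exp_lt_exp.mpr hx'
    have hpos : (0 : ℝ) < Real.exp (-2 * Real.exp x) := Real.exp_pos _
    nlinarith [mul_nonneg (mul_pos (Real.exp_pos x) hpos).le
      (by linarith : (0:ℝ) ≤ 2 * Real.exp x - 1)]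
end
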